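/- arXiv:1606.05975 — 6 statements merged into one kernel-verified Lean document; each statement's English description precedes it below -/
import Mathlib

section
/- Let ℓ be a positive integer and G a graph. If (A,B) is a cut of G of size ℓ, then there is an ordering σ of V(G) with cw_σ(G) = cw(G) that has at most (2ℓ+1)·(2·cw(G)+3) + 2ℓ many (A,B)-blocks. -/
/-- A finite undirected multigraph without loops. -/
structure Multigraph where
  V : Type
  E : Type
  finV : Finite V
  finE : Finite E
  ends : E → V × V
  loopless : ∀ e, (ends e).1 ≠ (ends e).2

attribute [instance] Multigraph.finV Multigraph.finE

namespace Multigraph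

/-- `δ_G(S)`: the number of edges of `G` with exactly one endpoint in `S`. -/
noncomputable def delta (G : Multigraph) (S : Set G.V) : ℕ :=
  {e : G.E | ¬ ((G.ends e).1 ∈ S ↔ (G.ends e).2 ∈ S)}.ncard

/-- The width `cw_σ(G)` of an ordering, represented as an injective ranking `ρ : V → ℕ`. -/
noncomputable def cwOrd (G : Multigraph) (ρ : G.V → ℕ) : ℕ :=
  sSup {w | ∃ v : G.V, w = G.delta {u | ρ u ≤ ρ v}}

/-- The cutwidth of a multigraph. -/
noncomputable def cutwidth (G : Multigraph) : ℕ :=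
  sInf {w | ∃ ρ : G.V → ℕ, Function.Injective ρ ∧ G.cwOrd ρ = w}

/-- Walks in a multigraph. -/
inductive Walk (G : Multigraph) : G.V → G.V → Type
  | nil (v : G.V) : Walk G v v
  | cons {u v w : G.V} (e : G.E)
      (h : G.ends e = (u, v) ∨ G.ends e = (v, u)) (p : Walk G v w) : Walk G u w

namespace Walk

def edges {G : Multigraph} : ∀ {u v : G.V}, G.Walk u v → List G.E
  | _, _, .nil _ => []
  | _, _, .cons e _ p => e :: p.edges

def support {G : Multigraph} : ∀ {u v : G.V}, G.Walk u v → List G.V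
  | _, _, .nil v => [v]
  | u, _, .cons _ _ p => u :: p.support

end Walk

def Connected (G : Multigraph) : Prop := ∀ u v : G.V, Nonempty (G.Walk u v)

/-- An immersion model of `H` in `G`. -/
structure ImmersionModel (H G : Multigraph) where
  vmap : H.V → G.V
  inj : Function.Injective vmap
  emap : (e : H.E) → G.Walk (vmap (H.ends e).1) (vmap (H.ends e).2)
  isPath : ∀ e, ((emap e).support).Nodup
  edgeDisj : ∀ e e', e ≠ e' → ∀ f, f ∈ (emap e).edges → f ∉ (emap e').edges

/-- `H ≤_i G`. -/
def Immersion (H G : Multigraph) : Prop := Nonempty (ImmersionModel H G)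

/-- A strong immersion model: no internal vertex of a path is a branch vertex. -/
structure StrongImmersionModel (H G : Multigraph) extends ImmersionModel H G where
  strong : ∀ e, ∀ x, x ∈ (emap e).support →
    x ≠ vmap (H.ends e).1 → x ≠ vmap (H.ends e).2 → x ∉ Set.range vmap

/-- `H ≤_si G`. -/
def StrongImmersion (H G : Multigraph) : Prop := Nonempty (StrongImmersionModel H G)

/-- Isomorphism of multigraphs. -/
structure Iso (G H : Multigraph) where
  fv : G.V ≃ H.V
  fe : G.E ≃ H.E
  pres : ∀ e, H.ends (fe e) = (fv (G.ends e).1, fv (G.ends e).2)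
           ∨ H.ends (fe e) = (fv (G.ends e).2, fv (G.ends e).1)

def Isomorphic (G H : Multigraph) : Prop := Nonempty (Iso G H)

/-- The minimal obstruction set of a class `C` with respect to a partial order `le`. -/
def obstructions (le : Multigraph → Multigraph → Prop) (C : Set Multigraph) :
    Set Multigraph :=
  {G | G ∉ C ∧ ∀ G', le G' G → ¬ G'.Isomorphic G → G' ∈ C}

/-- `C_k`: the class of multigraphs of cutwidth at most `k`. -/
def cutwidthClass (k : ℕ) : Set Multigraph := {G | G.cutwidth ≤ k}

/-- The degree of a vertex (each parallel edge counts once at each endpoint). -/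
noncomputable def degree (G : Multigraph) (v : G.V) : ℕ :=
  {e : G.E | (G.ends e).1 = v ∨ (G.ends e).2 = v}.ncard

/-- The number of `A`-blocks of an ordering `ρ`: the number of maximal runs of
consecutive (in `ρ`) vertices belonging to `A`, counted via block-starting vertices. -/
noncomputable def blockCount (G : Multigraph) (ρ : G.V → ℕ) (A : Set G.V) : ℕ :=
  {v : G.V | v ∈ A ∧ ∀ u : G.V, ρ u < ρ v →
      ∃ w : G.V, w ∉ A ∧ ρ u ≤ ρ w ∧ ρ w < ρ v}.ncard

/-- The extension `G*` of a `k`-boundaried graph `(G, x)`. -/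
def extension (G : Multigraph) {k : ℕ} (x : Fin k → G.V) : Multigraph where
  V := G.V ⊕ Fin k
  E := G.E ⊕ Fin k
  finV := inferInstance
  finE := inferInstance
  ends := Sum.elim (fun e => (Sum.inl (G.ends e).1, Sum.inl (G.ends e).2))
                   (fun i => (Sum.inl (x i), Sum.inr i))
  loopless := by
    rintro (e | i)
    · simpa using G.loopless e
    · simp

/-- The join `𝐀 ⊕ 𝐁` of two `k`-boundaried graphs. -/
def join {k : ℕ} (A B : Multigraph) (x : Fin k → A.V) (y : Fin k → B.V) : Multigraph where
  V := A.V ⊕ B.V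
  E := (A.E ⊕ B.E) ⊕ Fin k
  finV := inferInstance
  finE := inferInstance
  ends := Sum.elim
    (Sum.elim (fun e => (Sum.inl (A.ends e).1, Sum.inl (A.ends e).2))
              (fun e => (Sum.inr (B.ends e).1, Sum.inr (B.ends e).2)))
    (fun i => (Sum.inl (x i), Sum.inr (y i)))
  loopless := by
    rintro ((e | e) | i)
    · simpa using A.loopless e
    · simpa using B.loopless e
    · simp

/-- An `ℓ`-bucketing of an ordering `ρ` (buckets indexed 1,…,ℓ). -/
def IsBucketing (G : Multigraph) (ρ : G.V → ℕ) (ℓ : ℕ) (T : G.V → ℕ) : Prop :=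
  (∀ v, 1 ≤ T v ∧ T v ≤ ℓ) ∧ ∀ u v : G.V, ρ u ≤ ρ v → T u ≤ T v

/-- `width(G,σ,T,i)`: the maximum size of a cut in `cuts(G,σ,T,i)`; these cuts
are described by their left side `S`, which contains all buckets before `i`,
a `σ`-downward-closed part of bucket `i`, and nothing else. -/
noncomputable def bucketWidth (G : Multigraph) (ρ : G.V → ℕ) (T : G.V → ℕ) (i : ℕ) : ℕ :=
  sSup {w | ∃ S : Set G.V,
    (∀ v, T v < i → v ∈ S) ∧ (∀ v ∈ S, T v ≤ i) ∧
    (∀ u v : G.V, T u = i → T v = i → ρ u ≤ ρ v → v ∈ S → u ∈ S) ∧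
    w = G.delta S}

/-- A `(k,ℓ)`-bucket interface. -/
structure BucketInterface (k ℓ : ℕ) where
  b : Fin k → ℕ
  b' : Fin k → ℕ
  mu : ℕ → ℕ
  mu' : ℕ → ℕ
  b_mem : ∀ i, b i ∈ Set.Icc 1 ℓ
  b'_mem : ∀ i, b' i ∈ Set.Icc 1 ℓ
  mu_le : ∀ j, mu j ≤ k
  mu'_le : ∀ j, mu' j ≤ k

/-- A `k`-boundaried graph `(G, x)` conforms with a `(k,ℓ)`-bucket interface. -/
def Conforms {k : ℕ} (G : Multigraph) (x : Fin k → G.V) (ℓ : ℕ)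
    (I : BucketInterface k ℓ) : Prop :=
  ∃ ρ : (G.extension x).V → ℕ, Function.Injective ρ ∧
  ∃ T : (G.extension x).V → ℕ, (G.extension x).IsBucketing ρ ℓ T ∧
    (∀ v : G.V, Odd (T (Sum.inl v))) ∧
    (∀ i : Fin k, Even (T (Sum.inr i))) ∧
    (∀ i : Fin k, T (Sum.inl (x i)) = I.b i) ∧
    (∀ i : Fin k, T (Sum.inr i) = I.b' i) ∧
    (∀ j ∈ Set.Icc 1 ℓ,
      G.bucketWidth (fun v => ρ (Sum.inl v)) (fun v => T (Sum.inl v)) j ≤ I.mu j) ∧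
    (∀ j ∈ Set.Icc 1 ℓ, (G.extension x).bucketWidth ρ T j ≤ I.mu' j)

/-- `m` pairwise edge-disjoint paths between the sets `X` and `Y`. -/
def ConnectorBetween (G : Multigraph) (X Y : Set G.V) (m : ℕ) : Prop :=
  ∃ (s t : Fin m → G.V) (P : (i : Fin m) → G.Walk (s i) (t i)),
    (∀ i, s i ∈ X) ∧ (∀ i, t i ∈ Y) ∧ (∀ i, (P i).support.Nodup) ∧
    ∀ i j, i ≠ j → ∀ f, f ∈ (P i).edges → f ∉ (P j).edges

/-- A linked ordering. -/
def Linked (G : Multigraph) (ρ : G.V → ℕ) : Prop :=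
  ∀ u u' : G.V, ρ u ≤ ρ u' →
    G.ConnectorBetween {z | ρ z ≤ ρ u} {z | ¬ ρ z ≤ ρ u'}
      (sInf {w | ∃ v : G.V, ρ u ≤ ρ v ∧ ρ v ≤ ρ u' ∧ w = G.delta {z | ρ z ≤ ρ v}})

/-- The multigraph obtained by deleting a set of edges. -/
def deleteEdges (G : Multigraph) (F : Set G.E) : Multigraph where
  V := G.V
  E := {e : G.E // e ∉ F}
  finV := G.finV
  finE := inferInstance
  ends e := G.ends e.1
  loopless e := G.loopless e.1

/-- `dcw_k(G)`: minimum number of edges to delete to reach cutwidth at most `k`. -/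
noncomputable def dcw (k : ℕ) (G : Multigraph) : ℕ :=
  sInf {w | ∃ F : Set G.E, (G.deleteEdges F).cutwidth ≤ k ∧ F.ncard = w}

/-- The class `C_{w,k}`. -/
def dcwClass (w k : ℕ) : Set Multigraph := {G | dcw k G ≤ w}

/-- Induced subgraph `G[X]`. -/
def induce (G : Multigraph) (X : Set G.V) : Multigraph where
  V := X
  E := {e : G.E // (G.ends e).1 ∈ X ∧ (G.ends e).2 ∈ X}
  finV := inferInstance
  finE := inferInstance
  ends e := (⟨(G.ends e.1).1, e.2.1⟩, ⟨(G.ends e.1).2, e.2.2⟩)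
  loopless := by
    intro e h
    exact G.loopless e.1 (Subtype.ext_iff.mp h)

/-- A graph is `ℋ`-immersion-free if it contains no member of `ℋ` as an immersion. -/
def ImmersionFree (H : Set Multigraph) (G : Multigraph) : Prop :=
  ∀ X ∈ H, ¬ Immersion X G

/-- `aic_ℋ(G)`: minimum number of edge deletions to reach an `ℋ`-immersion-free graph. -/
noncomputable def aic (H : Set Multigraph) (G : Multigraph) : ℕ :=
  sInf {w | ∃ F : Set G.E, ImmersionFree H (G.deleteEdges F) ∧ F.ncard = w}

/-- The class `C_{w,ℋ}`. -/
def aicClass (w : ℕ) (H : Set Multigraph) : Set Multigraph := {G | aic H G ≤ w}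

/-- `ℋ` is a `≤_i`-antichain. -/
def IsAntichainImm (H : Set Multigraph) : Prop :=
  ∀ G₁ ∈ H, ∀ G₂ ∈ H, Immersion G₁ G₂ → Isomorphic G₁ G₂

/-- Disjoint union of two multigraphs. -/
def disjUnion (G H : Multigraph) : Multigraph where
  V := G.V ⊕ H.V
  E := G.E ⊕ H.E
  finV := inferInstance
  finE := inferInstance
  ends := Sum.elim (fun e => (Sum.inl (G.ends e).1, Sum.inl (G.ends e).2))
                   (fun e => (Sum.inr (H.ends e).1, Sum.inr (H.ends e).2))
  loopless := by
    rintro (e | e)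
    · simpa using G.loopless e
    · simpa using H.loopless e

/-- Disjoint union of a finite family of multigraphs. -/
def sigmaUnion {m : ℕ} (Gs : Fin m → Multigraph) : Multigraph where
  V := Σ i, (Gs i).V
  E := Σ i, (Gs i).E
  finV := inferInstance
  finE := inferInstance
  ends e := (⟨e.1, ((Gs e.1).ends e.2).1⟩, ⟨e.1, ((Gs e.1).ends e.2).2⟩)
  loopless := by
    intro e h
    exact (Gs e.1).loopless e.2 (by simpa using h)

/-- `cw_σ(G,X) = δ_G(X) + cw_{σ_X}(G[X])`. -/
noncomputable def cwRel (G : Multigraph) (ρ : G.V → ℕ) (X : Set G.V) : ℕ :=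
  G.delta X + (G.induce X).cwOrd (fun v => ρ v.val)

/-- Membership in the family of prefixes relevant to `X`-linkedness: the complement
of `X` (the prefix right before `X` starts) and the prefixes ending inside `X`. -/
def IsXPrefix (G : Multigraph) (ρ : G.V → ℕ) (X : Set G.V) (P : Set G.V) : Prop :=
  P = Xᶜ ∨ ∃ v ∈ X, P = {z | ρ z ≤ ρ v}

/-- An `X`-linked ordering. -/
def XLinked (G : Multigraph) (ρ : G.V → ℕ) (X : Set G.V) : Prop :=
  (∀ u v : G.V, u ∉ X → v ∈ X → ρ u < ρ v) ∧
  ∀ P P' : Set G.V, G.IsXPrefix ρ X P → G.IsXPrefix ρ X P' → P ⊆ P' →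
    G.ConnectorBetween P P'ᶜ
      (sInf {w | ∃ Q : Set G.V, G.IsXPrefix ρ X Q ∧ P ⊆ Q ∧ Q ⊆ P' ∧ w = G.delta Q})

end Multigraph

namespace CWBlocks
open Multigraph List

/-! ### Edge classes and partial delta counts -/

def eBoth (G : Multigraph) (T : Set G.V) : Set G.E :=
  {e | (G.ends e).1 ∈ T ∧ (G.ends e).2 ∈ T}

def eCross (G : Multigraph) (T : Set G.V) : Set G.E :=
  {e | ¬(((G.ends e).1 ∈ T) ↔ ((G.ends e).2 ∈ T))}

noncomputable def dOn (G : Multigraph) (C : Set G.E) (S : Set G.V) : ℕ :=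
  {e : G.E | e ∈ C ∧ ¬(((G.ends e).1 ∈ S) ↔ ((G.ends e).2 ∈ S))}.ncard

variable {G : Multigraph}

lemma eCross_compl (T : Set G.V) : eCross G Tᶜ = eCross G T := by
  ext e; simp only [eCross, Set.mem_setOf_eq, Set.mem_compl_iff]; tauto

lemma dOn_union {C D : Set G.E} (h : Disjoint C D) (S : Set G.V) :
    dOn G (C ∪ D) S = dOn G C S + dOn G D S := by
  unfold dOn
  rw [show {e : G.E | e ∈ C ∪ D ∧ ¬(((G.ends e).1 ∈ S) ↔ ((G.ends e).2 ∈ S))}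
      = {e : G.E | e ∈ C ∧ ¬(((G.ends e).1 ∈ S) ↔ ((G.ends e).2 ∈ S))}
        ∪ {e : G.E | e ∈ D ∧ ¬(((G.ends e).1 ∈ S) ↔ ((G.ends e).2 ∈ S))} by
    ext e; simp only [Set.mem_setOf_eq, Set.mem_union]; tauto]
  exact Set.ncard_union_eq (by
    refine Set.disjoint_left.2 ?_
    intro e he he'
    exact Set.disjoint_left.1 h he.1 he'.1) (Set.toFinite _) (Set.toFinite _)

lemma delta_decomp (T : Set G.V) (S : Set G.V) :
    G.delta S = dOn G (eBoth G T) S + dOn G (eBoth G Tᶜ) S + dOn G (eCross G T) S := by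
  have h1 : G.delta S = dOn G Set.univ S := by
    unfold delta dOn; congr 1; ext e; simp
  have h2 : (Set.univ : Set G.E) = (eBoth G T ∪ eBoth G Tᶜ) ∪ eCross G T := by
    ext e; simp only [eBoth, eCross, Set.mem_union, Set.mem_setOf_eq, Set.mem_compl_iff,
      Set.mem_univ, true_iff]
    tauto
  rw [h1, h2, dOn_union, dOn_union]
  · refine Set.disjoint_left.2 ?_
    intro e he he'
    simp only [eBoth, eCross, Set.mem_setOf_eq, Set.mem_compl_iff] at he he'
    tauto
  · refine Set.disjoint_left.2 ?_
    intro e he he'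
    simp only [eBoth, eCross, Set.mem_union, Set.mem_setOf_eq, Set.mem_compl_iff] at he he'
    tauto

lemma dOn_congr {C : Set G.E} {S S' : Set G.V}
    (h : ∀ e ∈ C, (((G.ends e).1 ∈ S) ↔ ((G.ends e).1 ∈ S'))
        ∧ (((G.ends e).2 ∈ S) ↔ ((G.ends e).2 ∈ S'))) :
    dOn G C S = dOn G C S' := by
  unfold dOn; congr 1; ext e
  simp only [Set.mem_setOf_eq]
  constructor
  · rintro ⟨he, hx⟩; exact ⟨he, by rw [← (h e he).1, ← (h e he).2]; exact hx⟩
  · rintro ⟨he, hx⟩; exact ⟨he, by rw [(h e he).1, (h e he).2]; exact hx⟩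

lemma dOn_congr_both {T : Set G.V} {S S' : Set G.V}
    (h : ∀ v ∈ T, (v ∈ S ↔ v ∈ S')) :
    dOn G (eBoth G T) S = dOn G (eBoth G T) S' :=
  dOn_congr fun e he => ⟨h _ he.1, h _ he.2⟩

lemma dOn_congr_cross {T : Set G.V} {S S' : Set G.V} {W : Set G.V}
    (hfree : ∀ e ∈ eCross G T, (G.ends e).1 ∉ W ∧ (G.ends e).2 ∉ W)
    (h : ∀ v, v ∉ W → (v ∈ S ↔ v ∈ S')) :
    dOn G (eCross G T) S = dOn G (eCross G T) S' :=
  dOn_congr fun e he => ⟨h _ (hfree e he).1, h _ (hfree e he).2⟩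

lemma delta_empty : G.delta (∅ : Set G.V) = 0 := by
  unfold delta
  rw [show {e : G.E | ¬(((G.ends e).1 ∈ (∅ : Set G.V)) ↔ ((G.ends e).2 ∈ (∅ : Set G.V)))}
      = ∅ by ext e; simp]
  simp

lemma delta_univ : G.delta (Set.univ : Set G.V) = 0 := by
  unfold delta
  rw [show {e : G.E | ¬(((G.ends e).1 ∈ (Set.univ : Set G.V)) ↔ ((G.ends e).2 ∈ (Set.univ : Set G.V)))}
      = ∅ by ext e; simp]
  simp

lemma delta_congr {S S' : Set G.V} (h : S = S') : G.delta S = G.delta S' := by rw [h]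


/-! ### List prefix sets -/

def lset {α : Type} (l : List α) : Set α := {v | v ∈ l}

def preS {α : Type} (l : List α) (i : ℕ) : Set α := {v | v ∈ l.take i}

lemma preS_append {α : Type} (l1 l2 : List α) (i : ℕ) :
    preS (l1 ++ l2) i = preS l1 i ∪ preS l2 (i - l1.length) := by
  ext v; simp [preS, List.take_append]

lemma preS_zero {α : Type} (l : List α) : preS l 0 = ∅ := by simp [preS]

lemma preS_of_le {α : Type} (l : List α) {i : ℕ} (h : l.length ≤ i) : preS l i = lset l := by
  simp [preS, lset, List.take_of_length_le h]

lemma preS_length {α : Type} (l : List α) : preS l l.length = lset l :=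
  preS_of_le l le_rfl

lemma mem_take_iff {α : Type} [DecidableEq α] {l : List α} (hn : l.Nodup) {u : α}
    (hu : u ∈ l) (i : ℕ) : u ∈ l.take i ↔ l.idxOf u < i := by
  constructor
  · intro h
    obtain ⟨j, hj, hget⟩ := List.getElem_of_mem h
    have hj' : j < l.length := lt_of_lt_of_le hj (by simp [List.length_take])
    have : l[j] = u := by rw [← hget]; simp
    have : l.idxOf u = j := by rw [← this]; exact List.Nodup.idxOf_getElem hn j hj'
    rw [this]
    exact lt_of_lt_of_le hj (by simp [List.length_take])
  · intro h
    have hlt : l.idxOf u < l.length := List.idxOf_lt_length_iff.2 hu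
    have : (l.take i)[l.idxOf u]'(by simp [List.length_take]; omega) = u := by
      simp only [List.getElem_take]
      exact List.idxOf_get (h := hlt)
    rw [← this]
    exact List.getElem_mem _


/-- membership positions of a middle chunk -/
lemma idxOf_range_of_mem {α : Type} [DecidableEq α] {l1 X l2 : List α}
    (hn : (l1 ++ X ++ l2).Nodup) {v : α} (hv : v ∈ X) :
    l1.length ≤ (l1 ++ X ++ l2).idxOf v ∧
      (l1 ++ X ++ l2).idxOf v < l1.length + X.length := by
  have hd : List.Disjoint l1 X := List.disjoint_of_nodup_append (List.Nodup.of_append_left hn)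
  have h1 : v ∉ l1 := fun h => hd h hv
  rw [List.append_assoc, List.idxOf_append_of_notMem h1, List.idxOf_append_of_mem hv]
  exact ⟨Nat.le_add_right _ _, by
    have := List.idxOf_lt_length_iff.2 hv; omega⟩

lemma mem_of_idxOf_range {α : Type} [DecidableEq α] {l1 X l2 : List α}
    (hn : (l1 ++ X ++ l2).Nodup) {w : α} (hw : w ∈ l1 ++ X ++ l2)
    (h1 : l1.length ≤ (l1 ++ X ++ l2).idxOf w)
    (h2 : (l1 ++ X ++ l2).idxOf w < l1.length + X.length) : w ∈ X := by
  rcases List.mem_append.1 hw with hw' | hw2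
  · rcases List.mem_append.1 hw' with hw1 | hX
    · exfalso
      rw [List.append_assoc, List.idxOf_append_of_mem hw1] at h1
      exact absurd (List.idxOf_lt_length_iff.2 hw1) (by omega)
    · exact hX
  · exfalso
    have hd : List.Disjoint (l1 ++ X) l2 := List.disjoint_of_nodup_append hn
    have hnm : w ∉ l1 ++ X := fun h => hd h hw2
    rw [List.idxOf_append_of_notMem hnm] at h2
    simp only [List.length_append] at h2
    omega

/-! ### Valid block decompositions -/

structure Valid (G : Multigraph) (A : Set G.V) (k : ℕ) (B : List (List G.V)) : Prop where
  nodup : B.flatten.Nodup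
  complete : ∀ v, v ∈ B.flatten
  nonnil : ∀ X ∈ B, X ≠ []
  const : ∀ X ∈ B, (∀ v ∈ X, v ∈ A) ∨ (∀ v ∈ X, v ∉ A)
  width : ∀ i, G.delta (preS B.flatten i) ≤ k

lemma flatten_map_singleton {α : Type} (l : List α) :
    (l.map (fun v => [v])).flatten = l := by
  induction l with
  | nil => simp
  | cons a l ih => simp [ih]

/-- An ordering of width at most `k` gives a valid decomposition into singletons. -/
lemma exists_valid (G : Multigraph) (A : Set G.V) :
    ∃ B, Valid G A G.cutwidth B := by
  classical
  have hne : {w | ∃ ρ : G.V → ℕ, Function.Injective ρ ∧ G.cwOrd ρ = w}.Nonempty := by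
    obtain ⟨n, ⟨e⟩⟩ := Finite.exists_equiv_fin G.V
    exact ⟨_, fun v => (e v : ℕ), fun a b h => e.injective (Fin.val_injective h), rfl⟩
  obtain ⟨ρ, hinj, hw⟩ := Nat.sInf_mem hne
  haveI : Fintype G.V := Fintype.ofFinite _
  set r : G.V → G.V → Prop := fun u v => ρ u ≤ ρ v with hr
  haveI : DecidableRel r := fun a b => Nat.decLe _ _
  haveI : IsTrans G.V r := ⟨fun _ _ _ => le_trans⟩
  haveI : IsAntisymm G.V r := ⟨fun a b h1 h2 => hinj (le_antisymm h1 h2)⟩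
  haveI : IsTotal G.V r := ⟨fun a b => le_total _ _⟩
  set L : List G.V := Finset.sort Finset.univ r with hL
  have hnd : L.Nodup := Finset.sort_nodup _ r
  have hcm : ∀ v, v ∈ L := fun v => (Finset.mem_sort r).2 (Finset.mem_univ v)
  have hsort : L.Pairwise r := Finset.pairwise_sort _ r
  have hwidth : ∀ i, G.delta (preS L i) ≤ G.cutwidth := by
    intro i
    rcases Nat.eq_zero_or_pos i with h0 | hpos
    · rw [h0, preS_zero, delta_empty]; exact Nat.zero_le _
    rcases le_or_gt i L.length with hle | hgt
    swap
    · rw [preS_of_le L (le_of_lt hgt),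
        show lset L = Set.univ by ext v; simp [lset, hcm v], delta_univ]
      exact Nat.zero_le _
    · have hi1 : i - 1 < L.length := by omega
      have hpre : preS L i = {u | ρ u ≤ ρ (L.get ⟨i - 1, hi1⟩)} := by
        ext u
        have hu : u ∈ L := hcm u
        have hidx : L.idxOf u < L.length := List.idxOf_lt_length_iff.2 hu
        have hgetu : L.get ⟨L.idxOf u, hidx⟩ = u := List.idxOf_get (h := hidx)
        simp only [preS, Set.mem_setOf_eq]
        rw [mem_take_iff hnd hu]
        constructor
        · intro h
          rcases eq_or_lt_of_le (show L.idxOf u ≤ i - 1 by omega) with heq | hlt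
          · have : u = L.get ⟨i - 1, hi1⟩ := by
              rw [← hgetu]; congr 1; exact Fin.ext heq
            exact le_of_eq (congrArg ρ this)
          · have hr2 : r (L.get ⟨L.idxOf u, hidx⟩) (L.get ⟨i - 1, hi1⟩) :=
              hsort.rel_get_of_lt (by simpa using hlt)
            rwa [hgetu] at hr2
        · intro h
          by_contra hc
          push_neg at hc
          have hlt : i - 1 < L.idxOf u := by omega
          have hr2 : r (L.get ⟨i - 1, hi1⟩) (L.get ⟨L.idxOf u, hidx⟩) :=
            hsort.rel_get_of_lt (by simpa using hlt)
          rw [hgetu] at hr2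
          have huv : u = L.get ⟨i - 1, hi1⟩ := hinj (le_antisymm h hr2)
          have hieq : L.idxOf (L.get ⟨i - 1, hi1⟩) = i - 1 := by
            have := List.Nodup.idxOf_getElem hnd (i - 1) hi1
            simpa using this
          rw [huv, hieq] at hc
          omega
      rw [hpre]
      have hfin : {w | ∃ x : G.V, w = G.delta {u | ρ u ≤ ρ x}}.Finite := by
        have heq : {w | ∃ x : G.V, w = G.delta {u | ρ u ≤ ρ x}}
            = Set.range (fun x : G.V => G.delta {u | ρ u ≤ ρ x}) := by
          ext w; simp [eq_comm]
        rw [heq]; exact Set.finite_range _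
      have h1 : G.delta {u | ρ u ≤ ρ (L.get ⟨i - 1, hi1⟩)} ≤ G.cwOrd ρ :=
        le_csSup hfin.bddAbove ⟨_, rfl⟩
      have h2 : G.cwOrd ρ = G.cutwidth := hw
      omega
  refine ⟨L.map (fun v => [v]), ?_, ?_, ?_, ?_, ?_⟩
  · rw [flatten_map_singleton]; exact hnd
  · rw [flatten_map_singleton]; exact hcm
  · intro X hX
    simp only [List.mem_map] at hX
    obtain ⟨v, _, rfl⟩ := hX
    simp
  · intro X hX
    simp only [List.mem_map] at hX
    obtain ⟨v, _, rfl⟩ := hX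
    by_cases h : v ∈ A
    · left; intro w hw; simp at hw; rwa [hw]
    · right; intro w hw; simp at hw; rwa [hw]
  · rw [flatten_map_singleton]; exact hwidth

/-! ### Merging adjacent same-side blocks -/

lemma valid_merge {G : Multigraph} {A : Set G.V} {k : ℕ} {B1 B2 : List (List G.V)}
    {X Y : List G.V} (h : Valid G A k (B1 ++ X :: Y :: B2))
    (hs : ((∀ v ∈ X, v ∈ A) ∧ (∀ v ∈ Y, v ∈ A)) ∨ ((∀ v ∈ X, v ∉ A) ∧ (∀ v ∈ Y, v ∉ A))) :
    Valid G A k (B1 ++ (X ++ Y) :: B2) := by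
  have hfl : (B1 ++ (X ++ Y) :: B2).flatten = (B1 ++ X :: Y :: B2).flatten := by
    simp [List.flatten_append, List.append_assoc]
  refine ⟨by rw [hfl]; exact h.nodup, by rw [hfl]; exact h.complete, ?_, ?_,
    by rw [hfl]; exact h.width⟩
  · intro Z hZ
    rcases List.mem_append.1 hZ with h1 | h2
    · exact h.nonnil Z (by simp [h1])
    · rcases List.mem_cons.1 h2 with rfl | h3
      · intro hnil
        rcases List.append_eq_nil_iff.1 hnil with ⟨rfl, rfl⟩
        exact h.nonnil [] (by simp) rfl
      · exact h.nonnil Z (by simp [h3])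
  · intro Z hZ
    rcases List.mem_append.1 hZ with h1 | h2
    · exact h.const Z (by simp [h1])
    · rcases List.mem_cons.1 h2 with rfl | h3
      · rcases hs with ⟨hX, hY⟩ | ⟨hX, hY⟩
        · left; intro v hv; rcases List.mem_append.1 hv with h' | h'
          exacts [hX v h', hY v h']
        · right; intro v hv; rcases List.mem_append.1 hv with h' | h'
          exacts [hX v h', hY v h']
      · exact h.const Z (by simp [h3])

/-! ### Splitting delta across a two-sided modification -/

lemma delta_split {G : Multigraph} (T : Set G.V) (P U W : Set G.V)
    (hU : ∀ v ∈ U, v ∈ T) (hW : ∀ v ∈ W, v ∉ T)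
    (hfree : ∀ e ∈ eCross G T,
      ((G.ends e).1 ∉ U ∧ (G.ends e).1 ∉ W) ∧ ((G.ends e).2 ∉ U ∧ (G.ends e).2 ∉ W)) :
    G.delta (P ∪ U ∪ W)
      = dOn G (eBoth G T) (P ∪ U) + dOn G (eBoth G Tᶜ) (P ∪ W) + dOn G (eCross G T) P := by
  rw [delta_decomp T]
  congr 1
  · congr 1
    · exact dOn_congr_both (fun v hv => by
        simp only [Set.mem_union]
        constructor
        · rintro ((h | h) | h)
          exacts [Or.inl h, Or.inr h, absurd hv (hW v h)]
        · rintro (h | h)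
          exacts [Or.inl (Or.inl h), Or.inl (Or.inr h)])
    · exact dOn_congr_both (T := Tᶜ) (fun v hv => by
        simp only [Set.mem_union]
        constructor
        · rintro ((h | h) | h)
          exacts [Or.inl h, absurd (hU v h) (Set.mem_compl_iff _ _ |>.1 hv), Or.inr h]
        · rintro (h | h)
          exacts [Or.inl (Or.inl h), Or.inr h])
  · exact dOn_congr_cross (W := U ∪ W) (fun e he => by
      obtain ⟨⟨h1, h2⟩, ⟨h3, h4⟩⟩ := hfree e he
      constructor <;> simp only [Set.mem_union] <;> tauto)
      (fun v hv => by
        simp only [Set.mem_union] at hv ⊢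
        push_neg at hv
        constructor
        · rintro ((h | h) | h)
          exacts [h, absurd h hv.1, absurd h hv.2]
        · exact fun h => Or.inl (Or.inl h))

/-! ### The swap lemma -/

lemma swap_width {G : Multigraph} {k : ℕ} (T : Set G.V) (J1 X Y J2 : List G.V)
    (hw : ∀ i, G.delta (preS (J1 ++ (X ++ (Y ++ J2))) i) ≤ k)
    (hX : ∀ v ∈ X, v ∈ T) (hY : ∀ v ∈ Y, v ∉ T)
    (hD : ∀ e ∈ eCross G T,
      ((G.ends e).1 ∉ X ∧ (G.ends e).1 ∉ Y) ∧ ((G.ends e).2 ∉ X ∧ (G.ends e).2 ∉ Y))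
    (h1 : dOn G (eBoth G T) (lset J1) ≤ dOn G (eBoth G T) (lset J1 ∪ lset X))
    (h2 : dOn G (eBoth G Tᶜ) (lset J1 ∪ lset Y) ≤ dOn G (eBoth G Tᶜ) (lset J1)) :
    ∀ i, G.delta (preS (J1 ++ (Y ++ (X ++ J2))) i) ≤ k := by
  have hXs : ∀ s, ∀ v ∈ preS X s, v ∈ T := fun s v hv => hX v (List.mem_of_mem_take hv)
  have hYs : ∀ s, ∀ v ∈ preS Y s, v ∉ T := fun s v hv => hY v (List.mem_of_mem_take hv)
  have hfree : ∀ (U W : Set G.V), (∀ v ∈ U, v ∈ lset X) → (∀ v ∈ W, v ∈ lset Y) →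
      ∀ e ∈ eCross G T,
      ((G.ends e).1 ∉ U ∧ (G.ends e).1 ∉ W) ∧ ((G.ends e).2 ∉ U ∧ (G.ends e).2 ∉ W) := by
    intro U W hU hW e he
    obtain ⟨⟨a1, a2⟩, ⟨a3, a4⟩⟩ := hD e he
    exact ⟨⟨fun h => a1 (hU _ h), fun h => a2 (hW _ h)⟩,
      ⟨fun h => a3 (hU _ h), fun h => a4 (hW _ h)⟩⟩
  intro i
  set a := J1.length with ha
  set b := Y.length with hb
  set c := X.length with hc
  have hrw : preS (J1 ++ (Y ++ (X ++ J2))) i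
      = preS J1 i ∪ (preS Y (i - a) ∪ (preS X (i - a - b) ∪ preS J2 (i - a - b - c))) := by
    rw [preS_append, preS_append, preS_append]
  have hrwo : ∀ j, preS (J1 ++ (X ++ (Y ++ J2))) j
      = preS J1 j ∪ (preS X (j - a) ∪ (preS Y (j - a - c) ∪ preS J2 (j - a - c - b))) := by
    intro j
    rw [preS_append, preS_append, preS_append]
  rcases le_or_gt i a with hia | hia
  · have heq : preS (J1 ++ (Y ++ (X ++ J2))) i = preS (J1 ++ (X ++ (Y ++ J2))) i := by
      rw [hrw, hrwo]
      have h0 : i - a = 0 := by omega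
      rw [h0]
      simp [preS_zero]
    rw [heq]; exact hw i
  rcases le_or_gt i (a + b) with hib | hib
  · -- prefix is J1 plus a piece of Y
    have hset : preS (J1 ++ (Y ++ (X ++ J2))) i = (lset J1 ∪ ∅) ∪ preS Y (i - a) := by
      rw [hrw, preS_of_le J1 (by omega)]
      have h0 : i - a - b = 0 := by omega
      rw [h0]
      ext v
      simp only [Set.mem_union, preS_zero, Set.mem_empty_iff_false, Nat.zero_sub]
      tauto
    rw [hset]
    have eq1 := delta_split T (lset J1) ∅ (preS Y (i - a)) (by simp) (hYs _)
      (hfree ∅ _ (by simp) (fun v hv => List.mem_of_mem_take hv))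
    have eq2 := delta_split T (lset J1) (lset X) (preS Y (i - a)) hX (hYs _)
      (hfree _ _ (fun v hv => hv) (fun v hv => List.mem_of_mem_take hv))
    have horig := hw (a + c + (i - a))
    rw [hrwo (a + c + (i - a))] at horig
    have hsame : preS J1 (a + c + (i - a)) ∪ (preS X (a + c + (i - a) - a)
          ∪ (preS Y (a + c + (i - a) - a - c) ∪ preS J2 (a + c + (i - a) - a - c - b)))
        = (lset J1 ∪ lset X) ∪ preS Y (i - a) := by
      have e1 : a + c + (i - a) - a = c + (i - a) := by omega
      have e2 : c + (i - a) - c = i - a := by omega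
      have e3 : i - a - b = 0 := by omega
      rw [e1, e2, e3, preS_zero, preS_of_le J1 (by omega), preS_of_le X (by omega)]
      ext v
      simp only [Set.mem_union, Set.mem_empty_iff_false]
      tauto
    rw [hsame, eq2] at horig
    rw [eq1]
    have h1' : dOn G (eBoth G T) (lset J1 ∪ ∅) ≤ dOn G (eBoth G T) (lset J1 ∪ lset X) := by
      rw [Set.union_empty]; exact h1
    omega
  rcases le_or_gt i (a + b + c) with hic | hic
  · -- prefix is J1, all of Y, and a piece of X
    have hset : preS (J1 ++ (Y ++ (X ++ J2))) i
        = (lset J1 ∪ preS X (i - a - b)) ∪ lset Y := by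
      rw [hrw, preS_of_le J1 (by omega), preS_of_le Y (by omega)]
      have h0 : i - a - b - c = 0 := by omega
      rw [h0, preS_zero]
      ext v
      simp only [Set.mem_union, Set.mem_empty_iff_false]
      tauto
    rw [hset]
    have eq1 := delta_split T (lset J1) (preS X (i - a - b)) (lset Y) (hXs _) hY
      (hfree _ _ (fun v hv => List.mem_of_mem_take hv) (fun v hv => hv))
    have eq2 := delta_split T (lset J1) (preS X (i - a - b)) ∅ (hXs _) (by simp)
      (hfree _ _ (fun v hv => List.mem_of_mem_take hv) (by simp))
    have horig := hw (i - b)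
    rw [hrwo (i - b)] at horig
    have hsame : preS J1 (i - b) ∪ (preS X (i - b - a)
          ∪ (preS Y (i - b - a - c) ∪ preS J2 (i - b - a - c - b)))
        = (lset J1 ∪ preS X (i - a - b)) ∪ ∅ := by
      have e1 : i - b - a = i - a - b := by omega
      have e2 : i - a - b - c = 0 := by omega
      rw [e1, e2, Nat.zero_sub, preS_zero, preS_of_le J1 (by omega)]
      ext v
      simp only [Set.mem_union, Set.mem_empty_iff_false]
      tauto
    rw [hsame, eq2] at horig
    rw [eq1]
    have h2' : dOn G (eBoth G Tᶜ) (lset J1 ∪ lset Y) ≤ dOn G (eBoth G Tᶜ) (lset J1 ∪ ∅) := by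
      rw [Set.union_empty]; exact h2
    omega
  · -- beyond both blocks : same vertex set as before
    have heq : preS (J1 ++ (Y ++ (X ++ J2))) i = preS (J1 ++ (X ++ (Y ++ J2))) i := by
      rw [hrw, hrwo, preS_of_le J1 (by omega), preS_of_le X (by omega),
        preS_of_le X (by omega), preS_of_le Y (by omega), preS_of_le Y (by omega)]
      have e1 : i - a - b - c = i - a - c - b := by omega
      rw [e1]
      ext v
      simp only [Set.mem_union]
      tauto
    rw [heq]; exact hw i

/-! ### Arithmetic: a zigzag-free sequence bounded by k has short runs -/

lemma run_bound {d : ℕ → ℕ} {k s j : ℕ} (hd : ∀ t, d t ≤ k)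
    (hstep : ∀ t, s ≤ t → t < j → d (t + 1) < d t ∨ d (t + 1) < d (t + 2)) :
    j ≤ s + 2 * k + 1 := by
  by_contra hcon
  push_neg at hcon
  -- Phase 1 : find r ∈ [s, s+k] with ¬ d (r+1) < d r
  have claimA : ∀ t : ℕ, (∀ i < t, d (s + i + 1) < d (s + i)) → d (s + t) + t ≤ d s := by
    intro t
    induction t with
    | zero => simp
    | succ t ih =>
      intro h
      have h1 := h t (by omega)
      have h2 := ih (fun i hi => h i (by omega))
      rw [show s + (t + 1) = s + t + 1 by omega]
      omega
  have hex : ∃ i, ¬ d (s + i + 1) < d (s + i) := by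
    by_contra hall
    push_neg at hall
    have := claimA (k + 1) (fun i _ => hall i)
    have := hd s
    omega
  classical
  set r0 := Nat.find hex with hr0
  have hr0spec : ¬ d (s + r0 + 1) < d (s + r0) := Nat.find_spec hex
  have hr0min : ∀ i < r0, d (s + i + 1) < d (s + i) := by
    intro i hi
    have := Nat.find_min hex hi
    push_neg at this
    omega
  have hr0le : r0 ≤ k := by
    by_contra hr
    push_neg at hr
    have := claimA (k + 1) (fun i hi => hr0min i (by omega))
    have := hd s
    omega
  set r := s + r0 with hr
  -- Phase 2 : strictly increasing after r
  have claimB : ∀ t : ℕ, r + t + 1 ≤ j →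
      d (r + 1) + t ≤ d (r + t + 1) ∧ ¬ d (r + t + 1) < d (r + t) := by
    intro t
    induction t with
    | zero =>
      intro _
      constructor
      · rw [show r + 0 + 1 = r + 1 by omega]; omega
      · rw [show r + 0 + 1 = r + 1 by omega, show r + 0 = r by omega]; exact hr0spec
    | succ t ih =>
      intro hle
      obtain ⟨ih1, ih2⟩ := ih (by omega)
      have hstep' := hstep (r + t) (by omega) (by omega)
      have hup : d (r + t + 1) < d (r + t + 2) := by tauto
      rw [show r + (t + 1) + 1 = r + t + 2 by omega, show r + (t + 1) = r + t + 1 by omega]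
      omega
  have hfin := (claimB (k + 1) (by omega)).1
  have h1 := hd (r + (k + 1) + 1)
  omega

/-- Counting blocks via runs: if every (inclusive) run of consecutive `DF` indices
below `m` has length at most `k2 + 1`, then
`m ≤ g + (g+1)*(k2+1)` where `g` counts the non-`DF` indices below `m`. -/
lemma count_bound (m k2 : ℕ) (DF : ℕ → Prop) [DecidablePred DF]
    (hrun : ∀ s j, s ≤ j → j < m → (∀ i, s ≤ i → i ≤ j → DF i) → j - s ≤ k2) :
    m ≤ ((Finset.range m).filter (fun i => ¬ DF i)).card
      + (((Finset.range m).filter (fun i => ¬ DF i)).card + 1) * (k2 + 1) := by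
  set g : ℕ → ℕ := fun j => ((Finset.range j).filter (fun i => ¬ DF i)).card with hg
  have hgmono : ∀ {j j'}, j ≤ j' → g j ≤ g j' := by
    intro j j' h
    exact Finset.card_le_card (Finset.filter_subset_filter _
      (Finset.range_subset_range.2 h))
  have hgsucc : ∀ j, DF j → g (j + 1) = g j := by
    intro j hDF
    have : Finset.range (j + 1) = insert j (Finset.range j) := by
      rw [Finset.range_add_one]
    rw [hg]
    simp only
    rw [this, Finset.filter_insert, if_neg (by simpa using hDF)]
  have hgsucc' : ∀ j, ¬ DF j → g (j + 1) = g j + 1 := by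
    intro j hDF
    have : Finset.range (j + 1) = insert j (Finset.range j) := by
      rw [Finset.range_add_one]
    rw [hg]
    simp only
    rw [this, Finset.filter_insert, if_pos (by simpa using hDF),
      Finset.card_insert_of_notMem (by simp)]
  -- main claim by strong induction
  have main : ∀ j, j ≤ m → j ≤ g j + (g j + 1) * (k2 + 1) := by
    intro j
    induction j using Nat.strong_induction_on with
    | _ j ih =>
      intro hjm
      rcases Nat.eq_zero_or_pos j with rfl | hj
      · omega
      by_cases hDF : DF (j - 1)
      · -- take the maximal DF-run ending at j-1
        have hexs : ∃ s, ∀ i, s ≤ i → i ≤ j - 1 → DF i := ⟨j - 1, by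
          intro i h1 h2
          have : i = j - 1 := by omega
          rwa [this]⟩
        set s := Nat.find hexs with hs
        have hsspec : ∀ i, s ≤ i → i ≤ j - 1 → DF i := Nat.find_spec hexs
        have hsle : s ≤ j - 1 := Nat.find_le (fun i h1 h2 => by
          have : i = j - 1 := by omega
          rwa [this])
        have hrunlen : j - 1 - s ≤ k2 := hrun s (j - 1) hsle (by omega) hsspec
        have hgconst : g j = g s := by
          have : ∀ t, s + t ≤ j → g (s + t) = g s := by
            intro t
            induction t with
            | zero => simp
            | succ t ih2 =>
              intro hle
              have : s + t < j := by omega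
              rw [show s + (t + 1) = (s + t) + 1 by omega,
                hgsucc (s + t) (hsspec (s + t) (by omega) (by omega)), ih2 (by omega)]
          have := this (j - s) (by omega)
          rwa [show s + (j - s) = j by omega] at this
        rcases Nat.eq_zero_or_pos s with hs0 | hspos
        · -- whole [0, j) is DF
          have : k2 + 1 ≤ (g j + 1) * (k2 + 1) := Nat.le_mul_of_pos_left _ (by omega)
          omega
        · have hnd : ¬ DF (s - 1) := by
            intro hc
            have := Nat.find_min hexs (m := s - 1) (by omega)
            push_neg at this
            obtain ⟨i, h1, h2, h3⟩ := this
            rcases Nat.eq_or_lt_of_le h1 with rfl | hl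
            · exact h3 hc
            · exact h3 (hsspec i (by omega) h2)
          have ihs := ih (s - 1) (by omega) (by omega)
          have hgs : g s = g (s - 1) + 1 := by
            rw [show s = (s - 1) + 1 by omega]
            exact hgsucc' (s - 1) hnd
          have hmul : (g (s - 1) + 1 + 1) * (k2 + 1)
              = (g (s - 1) + 1) * (k2 + 1) + (k2 + 1) := by ring
          rw [hgconst, hgs]
          omega
      · have ihj := ih (j - 1) (by omega) (by omega)
        have hgj : g j = g (j - 1) + 1 := by
          have := hgsucc' (j - 1) hDF
          rwa [show j - 1 + 1 = j by omega] at this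
        have hmul : (g (j - 1) + 1 + 1) * (k2 + 1)
            = (g (j - 1) + 1) * (k2 + 1) + (k2 + 1) := by ring
        rw [hgj]
        omega
  exact main m le_rfl

/-! ### Side predicates -/

def allIn {α : Type} (A : Set α) (X : List α) : Prop := ∀ v ∈ X, v ∈ A
def allOut {α : Type} (A : Set α) (X : List α) : Prop := ∀ v ∈ X, v ∉ A
def sameS {α : Type} (A : Set α) (X Y : List α) : Prop :=
  (allIn A X ∧ allIn A Y) ∨ (allOut A X ∧ allOut A Y)

lemma not_sameS_cases {α : Type} {A : Set α} {X Y : List α}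
    (hX : allIn A X ∨ allOut A X) (hY : allIn A Y ∨ allOut A Y)
    (h : ¬ sameS A X Y) :
    (allIn A X ∧ allOut A Y) ∨ (allOut A X ∧ allIn A Y) := by
  rcases hX with hx | hx <;> rcases hY with hy | hy
  · exact absurd (Or.inl ⟨hx, hy⟩) h
  · exact Or.inl ⟨hx, hy⟩
  · exact Or.inr ⟨hx, hy⟩
  · exact absurd (Or.inr ⟨hx, hy⟩) h

lemma sameS_of_not_not {α : Type} {A : Set α} {X Y W : List α}
    (hX : allIn A X ∨ allOut A X) (hY : allIn A Y ∨ allOut A Y)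
    (hW : allIn A W ∨ allOut A W) (hYne : Y ≠ [])
    (h1 : ¬ sameS A X Y) (h2 : ¬ sameS A Y W) : sameS A X W := by
  obtain ⟨v, hv⟩ := List.exists_mem_of_ne_nil Y hYne
  rcases not_sameS_cases hX hY h1 with ⟨hx, hy⟩ | ⟨hx, hy⟩ <;>
    rcases not_sameS_cases hY hW h2 with ⟨hy', hw⟩ | ⟨hy', hw⟩
  · exact absurd (hy' v hv) (hy v hv)
  · exact Or.inl ⟨hx, hw⟩
  · exact Or.inr ⟨hx, hw⟩
  · exact absurd (hy v hv) (hy' v hv)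

lemma lset_append {α : Type} (l1 l2 : List α) : lset (l1 ++ l2) = lset l1 ∪ lset l2 := by
  ext v; simp [lset]

/-! ### Alternation from minimality -/

lemma alt_lemma {G : Multigraph} {A : Set G.V} {k : ℕ} {B B1 B2 : List (List G.V)}
    {X Y : List G.V} (hv : Valid G A k B)
    (hmin : ∀ B', Valid G A k B' → B.length ≤ B'.length)
    (hB : B = B1 ++ X :: Y :: B2) : ¬ sameS A X Y := by
  intro hs
  have hval : Valid G A k (B1 ++ (X ++ Y) :: B2) := valid_merge (hB ▸ hv) hs
  have := hmin _ hval
  rw [hB] at this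
  simp only [List.length_append, List.length_cons] at this
  omega

/-! ### A valid swap contradicts minimality -/

lemma flatten_mid {α : Type} (B1 B2 : List (List α)) (X Y : List α) :
    (B1 ++ X :: Y :: B2).flatten = B1.flatten ++ (X ++ (Y ++ B2.flatten)) := by
  simp [List.flatten_append]

lemma swap_contradiction {G : Multigraph} {A : Set G.V} {k : ℕ}
    {B1 B2 : List (List G.V)} {X Y : List G.V}
    (hv : Valid G A k (B1 ++ X :: Y :: B2))
    (hmin : ∀ B', Valid G A k B' → (B1 ++ X :: Y :: B2).length ≤ B'.length)
    (hlen3 : 3 ≤ (B1 ++ X :: Y :: B2).length)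
    (T : Set G.V) (hcrossT : eCross G T = eCross G A)
    (hXT : ∀ v ∈ X, v ∈ T) (hYT : ∀ v ∈ Y, v ∉ T)
    (hDX : ∀ e ∈ eCross G A, (G.ends e).1 ∉ X ∧ (G.ends e).2 ∉ X)
    (hDY : ∀ e ∈ eCross G A, (G.ends e).1 ∉ Y ∧ (G.ends e).2 ∉ Y)
    (h1 : dOn G (eBoth G T) (lset B1.flatten)
        ≤ dOn G (eBoth G T) (lset B1.flatten ∪ lset X))
    (h2 : dOn G (eBoth G Tᶜ) (lset B1.flatten ∪ lset Y)
        ≤ dOn G (eBoth G Tᶜ) (lset B1.flatten)) : False := by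
  -- the swapped decomposition is valid
  have hmem : ∀ Z : List G.V, Z ∈ B1 ++ Y :: X :: B2 ↔ Z ∈ B1 ++ X :: Y :: B2 := by
    intro Z; simp; tauto
  have hperm : (B1 ++ X :: Y :: B2).flatten.Perm (B1 ++ Y :: X :: B2).flatten := by
    refine List.Perm.flatten ?_
    exact List.Perm.append_left _ (List.Perm.swap _ _ _)
  have hwidth' : ∀ i, G.delta (preS (B1 ++ Y :: X :: B2).flatten i) ≤ k := by
    have hw0 : ∀ i, G.delta (preS (B1.flatten ++ (X ++ (Y ++ B2.flatten))) i) ≤ k := by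
      intro i
      have := hv.width i
      rwa [flatten_mid] at this
    have hsw := swap_width T B1.flatten X Y B2.flatten hw0 hXT hYT
      (by
        intro e he
        rw [hcrossT] at he
        exact ⟨⟨(hDX e he).1, (hDY e he).1⟩, ⟨(hDX e he).2, (hDY e he).2⟩⟩) h1 h2
    intro i
    rw [flatten_mid]
    exact hsw i
  have hv' : Valid G A k (B1 ++ Y :: X :: B2) := by
    refine ⟨hperm.nodup hv.nodup, fun v => (hperm.mem_iff).1 (hv.complete v), ?_, ?_, hwidth'⟩
    · intro Z hZ; exact hv.nonnil Z ((hmem Z).1 hZ)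
    · intro Z hZ; exact hv.const Z ((hmem Z).1 hZ)
  -- now find a mergeable pair in the swapped decomposition
  have hXblk : X ∈ B1 ++ X :: Y :: B2 := by simp
  have hYblk : Y ∈ B1 ++ X :: Y :: B2 := by simp
  have hXside := hv.const X hXblk
  have hYside := hv.const Y hYblk
  have hXYne : ¬ sameS A X Y := alt_lemma hv hmin rfl
  rcases List.eq_nil_or_concat' B1 with rfl | ⟨B1', Z, rfl⟩
  · -- B1 empty : B = X :: Y :: B2 with B2 = W :: B2'
    obtain ⟨W, B2', rfl⟩ : ∃ W B2', B2 = W :: B2' := by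
      cases B2 with
      | nil => simp at hlen3
      | cons W B2' => exact ⟨W, B2', rfl⟩
    have hWblk : W ∈ ([] : List (List G.V)) ++ X :: Y :: W :: B2' := by simp
    have hWside := hv.const W hWblk
    have hYWne : ¬ sameS A Y W :=
      alt_lemma (B1 := [X]) (B2 := B2') hv hmin rfl
    have hYne : Y ≠ [] := hv.nonnil Y hYblk
    have hXW : sameS A X W := sameS_of_not_not hXside hYside hWside hYne hXYne hYWne
    have hval2 : Valid G A k ([Y] ++ (X ++ W) :: B2') := by
      refine valid_merge (B1 := [Y]) (B2 := B2') ?_ hXW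
      simpa using hv'
    have := hmin _ hval2
    simp only [List.length_append, List.length_cons, List.length_nil] at this
    omega
  · -- B1 = B1' ++ [Z]
    have hZblk : Z ∈ (B1' ++ [Z]) ++ X :: Y :: B2 := by simp
    have hZside := hv.const Z hZblk
    have hZXne : ¬ sameS A Z X :=
      alt_lemma (B1 := B1') (B2 := Y :: B2) hv hmin (by simp)
    have hXne : X ≠ [] := hv.nonnil X hXblk
    have hZY : sameS A Z Y := sameS_of_not_not hZside hXside hYside hXne hZXne hXYne
    have hval2 : Valid G A k (B1' ++ (Z ++ Y) :: X :: B2) := by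
      refine valid_merge (B1 := B1') (B2 := X :: B2) ?_ hZY
      have heq : (B1' ++ [Z]) ++ Y :: X :: B2 = B1' ++ Z :: Y :: X :: B2 := by simp
      rwa [heq] at hv'
    have := hmin _ hval2
    simp only [List.length_append, List.length_cons] at this
    omega

/-! ### Decomposing a list at an index -/

lemma decomp_at {α : Type} (B : List (List α)) (j : ℕ) (hj : j + 1 < B.length) :
    B = B.take j ++ B.getD j [] :: B.getD (j + 1) [] :: B.drop (j + 2) := by
  have h1 : B.getD j [] = B[j]'(by omega) := List.getD_eq_getElem B [] (by omega)
  have h2 : B.getD (j + 1) [] = B[j + 1]'hj := List.getD_eq_getElem B [] hj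
  rw [h1, h2]
  conv_lhs => rw [← List.take_append_drop j B]
  congr 1
  rw [List.drop_eq_getElem_cons (i := j) (by omega)]
  congr 1
  rw [List.drop_eq_getElem_cons (i := j + 1) hj]

lemma take_succ_decomp {α : Type} (B : List (List α)) (j : ℕ) (hj : j < B.length) :
    B.take (j + 1) = B.take j ++ [B.getD j []] := by
  rw [List.getD_eq_getElem B [] hj, List.take_succ, List.getElem?_eq_getElem hj]
  rfl

lemma lset_take_flatten {α : Type} (B : List (List α)) (j : ℕ) :
    lset (B.take j).flatten = preS B.flatten ((B.take j).flatten).length := by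
  have h : B.flatten = (B.take j).flatten ++ (B.drop j).flatten := by
    rw [← List.flatten_append, List.take_append_drop]
  rw [h, preS_append, preS_of_le _ le_rfl, Nat.sub_self, preS_zero, Set.union_empty]

lemma d_le {G : Multigraph} {A : Set G.V} {k : ℕ} {B : List (List G.V)}
    (hv : Valid G A k B) (j : ℕ) : G.delta (lset (B.take j).flatten) ≤ k := by
  rw [lset_take_flatten]; exact hv.width _

/-! ### The no-safe-swap inequality -/

lemma step_lemma {G : Multigraph} {A : Set G.V} {k : ℕ} {B : List (List G.V)}
    (hv : Valid G A k B)
    (hmin : ∀ B', Valid G A k B' → B.length ≤ B'.length)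
    {j : ℕ} (hj : j + 1 < B.length) (hlen3 : 3 ≤ B.length)
    (hDX : ∀ e ∈ eCross G A, (G.ends e).1 ∉ B.getD j [] ∧ (G.ends e).2 ∉ B.getD j [])
    (hDY : ∀ e ∈ eCross G A,
      (G.ends e).1 ∉ B.getD (j + 1) [] ∧ (G.ends e).2 ∉ B.getD (j + 1) []) :
    G.delta (lset (B.take (j + 1)).flatten) < G.delta (lset (B.take j).flatten)
    ∨ G.delta (lset (B.take (j + 1)).flatten) < G.delta (lset (B.take (j + 2)).flatten) := by
  by_contra hcon
  push_neg at hcon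
  obtain ⟨hc1, hc2⟩ := hcon
  obtain ⟨B1, X, Y, B2, hB, hB1, hX, hY⟩ :
      ∃ B1 X Y B2, B = B1 ++ X :: Y :: B2 ∧ B1 = B.take j ∧ X = B.getD j []
        ∧ Y = B.getD (j + 1) [] :=
    ⟨_, _, _, _, decomp_at B j hj, rfl, rfl, rfl⟩
  rw [← hX] at hDX
  rw [← hY] at hDY
  have hset1 : lset (B.take (j + 1)).flatten = lset B1.flatten ∪ lset X := by
    rw [take_succ_decomp B j (by omega), List.flatten_append, lset_append, ← hX, ← hB1]
    congr 1
    simp [lset]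
  have hset2 : lset (B.take (j + 2)).flatten
      = (lset B1.flatten ∪ lset X) ∪ lset Y := by
    rw [show j + 2 = j + 1 + 1 from rfl, take_succ_decomp B (j + 1) (by omega),
      List.flatten_append, lset_append, ← hY, hset1]
    congr 1
    simp [lset]
  have hset0 : lset (B.take j).flatten = lset B1.flatten := by rw [hB1]
  rw [hset0, hset1] at hc1
  rw [hset1, hset2] at hc2
  -- sides of the two blocks
  have hXblk : X ∈ B := by rw [hB]; simp
  have hYblk : Y ∈ B := by rw [hB]; simp
  have hXside : allIn A X ∨ allOut A X := hv.const X hXblk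
  have hYside : allIn A Y ∨ allOut A Y := hv.const Y hYblk
  have hXYne : ¬ sameS A X Y := alt_lemma hv hmin hB
  have hfree1 : ∀ e ∈ eCross G A,
      ((G.ends e).1 ∉ lset X ∧ (G.ends e).1 ∉ lset Y)
      ∧ ((G.ends e).2 ∉ lset X ∧ (G.ends e).2 ∉ lset Y) :=
    fun e he => ⟨⟨(hDX e he).1, (hDY e he).1⟩, ⟨(hDX e he).2, (hDY e he).2⟩⟩
  rw [hB] at hv hmin hlen3
  rcases not_sameS_cases hXside hYside hXYne with ⟨hxin, hyout⟩ | ⟨hxout, hyin⟩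
  · -- X on the A side
    have eq0 := delta_decomp (G := G) A (lset B1.flatten)
    have eq1 : G.delta (lset B1.flatten ∪ lset X)
        = dOn G (eBoth G A) (lset B1.flatten ∪ lset X)
          + dOn G (eBoth G Aᶜ) (lset B1.flatten) + dOn G (eCross G A) (lset B1.flatten) := by
      have := delta_split A (lset B1.flatten) (lset X) ∅ hxin (by simp)
        (fun e he => ⟨⟨(hfree1 e he).1.1, by simp⟩, ⟨(hfree1 e he).2.1, by simp⟩⟩)
      simpa [Set.union_empty] using this
    have eq2 := delta_split A (lset B1.flatten) (lset X) (lset Y) hxin hyout hfree1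
    have s1 : dOn G (eBoth G A) (lset B1.flatten)
        ≤ dOn G (eBoth G A) (lset B1.flatten ∪ lset X) := by omega
    have s2 : dOn G (eBoth G Aᶜ) (lset B1.flatten ∪ lset Y)
        ≤ dOn G (eBoth G Aᶜ) (lset B1.flatten) := by omega
    exact swap_contradiction hv hmin hlen3 A rfl hxin hyout hDX hDY s1 s2
  · -- X on the Aᶜ side
    have hxin' : ∀ v ∈ X, v ∈ Aᶜ := fun v hv' => hxout v hv'
    have hyout' : ∀ v ∈ Y, v ∉ Aᶜ := fun v hv' h' => h' (hyin v hv')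
    have hfree1' : ∀ e ∈ eCross G Aᶜ,
        ((G.ends e).1 ∉ lset X ∧ (G.ends e).1 ∉ lset Y)
        ∧ ((G.ends e).2 ∉ lset X ∧ (G.ends e).2 ∉ lset Y) := by
      intro e he
      rw [eCross_compl] at he
      exact hfree1 e he
    have eq0 := delta_decomp (G := G) Aᶜ (lset B1.flatten)
    have eq1 : G.delta (lset B1.flatten ∪ lset X)
        = dOn G (eBoth G Aᶜ) (lset B1.flatten ∪ lset X)
          + dOn G (eBoth G Aᶜᶜ) (lset B1.flatten) + dOn G (eCross G Aᶜ) (lset B1.flatten) := by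
      have := delta_split Aᶜ (lset B1.flatten) (lset X) ∅ hxin' (by simp)
        (fun e he => ⟨⟨(hfree1' e he).1.1, by simp⟩, ⟨(hfree1' e he).2.1, by simp⟩⟩)
      simpa [Set.union_empty] using this
    have eq2 := delta_split Aᶜ (lset B1.flatten) (lset X) (lset Y) hxin' hyout' hfree1'
    have s1 : dOn G (eBoth G Aᶜ) (lset B1.flatten)
        ≤ dOn G (eBoth G Aᶜ) (lset B1.flatten ∪ lset X) := by omega
    have s2 : dOn G (eBoth G Aᶜᶜ) (lset B1.flatten ∪ lset Y)
        ≤ dOn G (eBoth G Aᶜᶜ) (lset B1.flatten) := by omega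
    exact swap_contradiction hv hmin hlen3 Aᶜ (eCross_compl A) hxin' hyout' hDX hDY s1 s2

/-! ### Disjointness of blocks -/

lemma blocks_disjoint {α : Type} {B : List (List α)} (hn : B.flatten.Nodup)
    {i i' : ℕ} (hne : i ≠ i') (hi : i < B.length) (hi' : i' < B.length) {v : α}
    (h1 : v ∈ B.getD i []) (h2 : v ∈ B.getD i' []) : False := by
  have hpw : List.Pairwise List.Disjoint B := (List.nodup_flatten.1 hn).2
  rw [List.pairwise_iff_getElem] at hpw
  rcases Nat.lt_or_ge i i' with hlt | hge
  · exact hpw i i' hi hi' hlt (by rwa [List.getD_eq_getElem B [] hi] at h1)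
      (by rwa [List.getD_eq_getElem B [] hi'] at h2)
  · have hlt : i' < i := by omega
    exact hpw i' i hi' hi hlt (by rwa [List.getD_eq_getElem B [] hi'] at h2)
      (by rwa [List.getD_eq_getElem B [] hi] at h1)

/-! ### At most one block-starter per block -/

lemma blockCount_le {G : Multigraph} {A : Set G.V} {k : ℕ} {B : List (List G.V)}
    [DecidableEq G.V] (hv : Valid G A k B) :
    G.blockCount (fun v => B.flatten.idxOf v) A
      + G.blockCount (fun v => B.flatten.idxOf v) Aᶜ ≤ B.length := by
  classical
  set ρ : G.V → ℕ := fun v => B.flatten.idxOf v with hρ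
  set m := B.length with hm
  -- the block index of a vertex
  have hexblk : ∀ v : G.V, ∃ i, v ∈ B.getD i [] := by
    intro v
    have hv' : v ∈ B.flatten := hv.complete v
    rw [List.mem_flatten] at hv'
    obtain ⟨l, hl, hvl⟩ := hv'
    obtain ⟨i, hi, rfl⟩ := List.getElem_of_mem hl
    exact ⟨i, by rwa [List.getD_eq_getElem B [] hi]⟩
  set φ : G.V → ℕ := fun v => Nat.find (hexblk v) with hφ
  have hφmem : ∀ v, v ∈ B.getD (φ v) [] := fun v => Nat.find_spec (hexblk v)
  have hφlt : ∀ v, φ v < m := by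
    intro v
    by_contra hc
    push_neg at hc
    have := hφmem v
    rw [List.getD_eq_default _ _ (by omega)] at this
    simp at this
  -- the key claim : no two starters in a single block
  have claim : ∀ (C : Set G.V), (∀ X ∈ B, (∀ v ∈ X, v ∈ C) ∨ (∀ v ∈ X, v ∉ C)) →
      ∀ (i : ℕ), i < m → ∀ v v', v ∈ B.getD i [] → v' ∈ B.getD i [] → v' ∈ C →
      (∀ u, ρ u < ρ v' → ∃ w, w ∉ C ∧ ρ u ≤ ρ w ∧ ρ w < ρ v') → ρ v < ρ v' → False := by
    intro C hCside i hi v v' hvX hv'X hv'C hst hlt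
    obtain ⟨w, hwC, hw1, hw2⟩ := hst v hlt
    have hXblk : B.getD i [] ∈ B := by
      rw [List.getD_eq_getElem B [] hi]
      exact List.getElem_mem _
    have hdrop : B.drop i = B.getD i [] :: B.drop (i + 1) := by
      rw [List.getD_eq_getElem B [] hi]
      exact List.drop_eq_getElem_cons (by omega)
    have hsplit : B.flatten = ((B.take i).flatten ++ B.getD i [])
        ++ (B.drop (i + 1)).flatten := by
      conv_lhs => rw [← List.take_append_drop i B]
      rw [List.flatten_append, hdrop, List.flatten_cons, List.append_assoc]
    have hn' : (((B.take i).flatten ++ B.getD i []) ++ (B.drop (i + 1)).flatten).Nodup := by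
      rw [← hsplit]; exact hv.nodup
    have hposv := idxOf_range_of_mem hn' hvX
    have hposv' := idxOf_range_of_mem hn' hv'X
    have hwL : w ∈ ((B.take i).flatten ++ B.getD i []) ++ (B.drop (i + 1)).flatten := by
      rw [← hsplit]; exact hv.complete w
    have conv1 : ∀ z : G.V,
        (((B.take i).flatten ++ B.getD i []) ++ (B.drop (i + 1)).flatten).idxOf z
          = ρ z := by
      intro z; rw [← hsplit]
    have hw1' := hw1
    have hw2' := hw2
    rw [← conv1 v, ← conv1 w] at hw1'
    rw [← conv1 w, ← conv1 v'] at hw2'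
    have hwX : w ∈ B.getD i [] := mem_of_idxOf_range hn' hwL (by omega) (by omega)
    rcases hCside _ hXblk with hall | hall
    · exact hwC (hall w hwX)
    · exact hall v' hv'X hv'C
  -- injectivity of φ on the union of the starter sets
  set SA : Set G.V := {v | v ∈ A ∧ ∀ u, ρ u < ρ v → ∃ w, w ∉ A ∧ ρ u ≤ ρ w ∧ ρ w < ρ v}
    with hSA
  set SB : Set G.V := {v | v ∈ Aᶜ ∧ ∀ u, ρ u < ρ v → ∃ w, w ∉ Aᶜ ∧ ρ u ≤ ρ w ∧ ρ w < ρ v}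
    with hSB
  have hCside' : ∀ X ∈ B, (∀ v ∈ X, v ∈ Aᶜ) ∨ (∀ v ∈ X, v ∉ Aᶜ) := by
    intro X hX
    rcases hv.const X hX with h | h
    · right; intro v hv' hc; exact hc (h v hv')
    · left; intro v hv'; exact h v hv'
  have hinjρ : Function.Injective ρ := by
    intro a b h
    exact (List.idxOf_inj (hv.complete a)).1 h
  have hinj : Set.InjOn φ (SA ∪ SB) := by
    intro v hvS v' hv'S heq
    rcases lt_trichotomy (ρ v) (ρ v') with hlt | heq' | hlt
    · exfalso
      rcases hv'S with hS | hS
      · exact claim A hv.const (φ v') (hφlt v') v v' (heq ▸ hφmem v) (hφmem v')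
          hS.1 hS.2 hlt
      · exact claim Aᶜ hCside' (φ v') (hφlt v') v v' (heq ▸ hφmem v) (hφmem v')
          hS.1 hS.2 hlt
    · exact hinjρ heq'
    · exfalso
      rcases hvS with hS | hS
      · exact claim A hv.const (φ v) (hφlt v) v' v (heq ▸ hφmem v') (hφmem v)
          hS.1 hS.2 hlt
      · exact claim Aᶜ hCside' (φ v) (hφlt v) v' v (heq ▸ hφmem v') (hφmem v)
          hS.1 hS.2 hlt
  -- count
  have hdisj : Disjoint SA SB := by
    refine Set.disjoint_left.2 ?_
    intro v hv1 hv2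
    exact hv2.1 hv1.1
  have hbc : G.blockCount ρ A = SA.ncard := rfl
  have hbc' : G.blockCount ρ Aᶜ = SB.ncard := rfl
  rw [hbc, hbc', ← Set.ncard_union_eq hdisj (Set.toFinite _) (Set.toFinite _)]
  calc (SA ∪ SB).ncard = (φ '' (SA ∪ SB)).ncard := (Set.ncard_image_of_injOn hinj).symm
    _ ≤ (Set.Iio m).ncard := Set.ncard_le_ncard
        (by rintro x ⟨v, _, rfl⟩; exact hφlt v) (Set.finite_Iio m)
    _ = m := by rw [← Finset.coe_range, Set.ncard_coe_finset, Finset.card_range]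

end CWBlocks

open Multigraph CWBlocks in
/-- if `(A, Aᶜ)` is a cut of size `ℓ`, then some optimum-cutwidth
ordering has at most `(2ℓ+1)(2·cw(G)+3) + 2ℓ` many `(A,B)`-blocks. -/
theorem optimum_ordering_with_few_blocks
    (ℓ : ℕ) (hℓ : 1 ≤ ℓ) (G : Multigraph) (A : Set G.V) (hA : G.delta A = ℓ) :
    ∃ ρ : G.V → ℕ, Function.Injective ρ ∧ G.cwOrd ρ = G.cutwidth ∧
      G.blockCount ρ A + G.blockCount ρ Aᶜ ≤
        (2 * ℓ + 1) * (2 * G.cutwidth + 3) + 2 * ℓ := by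
  classical
  set k := G.cutwidth with hk
  have hne : {m | ∃ B, Valid G A k B ∧ B.length = m}.Nonempty := by
    obtain ⟨B, hB⟩ := exists_valid G A
    exact ⟨B.length, B, hB, rfl⟩
  obtain ⟨B, hvB, hlenB⟩ := Nat.sInf_mem hne
  have hmin : ∀ B', Valid G A k B' → B.length ≤ B'.length := by
    intro B' h
    rw [hlenB]
    exact Nat.sInf_le ⟨B', h, rfl⟩
  have hinj : Function.Injective (fun v => B.flatten.idxOf v) := fun a b h =>
    (List.idxOf_inj (hvB.complete a)).1 h
  have hcards : (eCross G A).ncard = ℓ := hA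
  have hEne : (eCross G A).Nonempty := by
    apply Set.nonempty_of_ncard_ne_zero; omega
  obtain ⟨e0, he0⟩ := hEne
  have hwidth' : ∀ v : G.V,
      G.delta {u | B.flatten.idxOf u ≤ B.flatten.idxOf v} ≤ k := by
    intro v
    have hpre : {u | B.flatten.idxOf u ≤ B.flatten.idxOf v}
        = preS B.flatten (B.flatten.idxOf v + 1) := by
      ext u
      simp only [preS, Set.mem_setOf_eq]
      rw [mem_take_iff hvB.nodup (hvB.complete u)]
      omega
    rw [hpre]
    exact hvB.width _
  have hcw : G.cwOrd (fun v => B.flatten.idxOf v) = k := by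
    apply le_antisymm
    · refine csSup_le' ?_
      rintro w ⟨v, rfl⟩
      exact hwidth' v
    · exact Nat.sInf_le ⟨_, hinj, rfl⟩
  refine ⟨fun v => B.flatten.idxOf v, hinj, hcw, ?_⟩
  have hbcm := blockCount_le hvB
  -- block indices free of cut-edge endpoints
  set DF : ℕ → Prop := fun j => ∀ e ∈ eCross G A,
    (G.ends e).1 ∉ B.getD j [] ∧ (G.ends e).2 ∉ B.getD j [] with hDF
  have hrun : ∀ s j, s ≤ j → j < B.length →
      (∀ i, s ≤ i → i ≤ j → DF i) → j - s ≤ 2 * k + 1 := by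
    intro s j hsj hjm hall
    rcases le_or_gt B.length 2 with hm2 | hm3
    · omega
    have hj2 : j ≤ s + 2 * k + 1 := by
      refine run_bound (d := fun t => G.delta (lset (B.take t).flatten)) (k := k)
        (fun t => d_le hvB t) ?_
      intro t hts htj
      exact step_lemma hvB hmin (by omega) (by omega) (hall t (by omega) (by omega))
        (hall (t + 1) (by omega) (by omega))
    omega
  have hcount := count_bound B.length (2 * k + 1) DF hrun
  -- at most 2ℓ blocks contain endpoints of cut edges
  have hgbound : ((Finset.range B.length).filter (fun i => ¬ DF i)).card ≤ 2 * ℓ := by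
    have hDfin : ((fun e => (G.ends e).1) '' (eCross G A)
        ∪ (fun e => (G.ends e).2) '' (eCross G A)).Finite := Set.toFinite _
    have hDcard : ((fun e => (G.ends e).1) '' (eCross G A)
        ∪ (fun e => (G.ends e).2) '' (eCross G A)).ncard ≤ 2 * ℓ := by
      have h1 := Set.ncard_union_le ((fun e => (G.ends e).1) '' (eCross G A))
        ((fun e => (G.ends e).2) '' (eCross G A))
      have h2 := Set.ncard_image_le (f := fun e => (G.ends e).1)
        (s := eCross G A) (Set.toFinite _)
      have h3 := Set.ncard_image_le (f := fun e => (G.ends e).2)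
        (s := eCross G A) (Set.toFinite _)
      omega
    have hch : ∀ i : ℕ, ∃ w : G.V,
        i ∈ (Finset.range B.length).filter (fun i => ¬ DF i) →
        (w ∈ (fun e => (G.ends e).1) '' (eCross G A)
          ∪ (fun e => (G.ends e).2) '' (eCross G A)) ∧ w ∈ B.getD i [] := by
      intro i
      by_cases hi : i ∈ (Finset.range B.length).filter (fun i => ¬ DF i)
      · simp only [Finset.mem_filter, Finset.mem_range] at hi
        obtain ⟨him, hnDF⟩ := hi
        simp only [hDF] at hnDF
        push_neg at hnDF
        obtain ⟨e, he, hcase⟩ := hnDF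
        by_cases h1 : (G.ends e).1 ∈ B.getD i []
        · exact ⟨(G.ends e).1, fun _ => ⟨Or.inl ⟨e, he, rfl⟩, h1⟩⟩
        · exact ⟨(G.ends e).2, fun _ => ⟨Or.inr ⟨e, he, rfl⟩, hcase h1⟩⟩
      · exact ⟨(G.ends e0).1, fun h => absurd h hi⟩
    choose ψ hψ using hch
    have hcard : ((Finset.range B.length).filter (fun i => ¬ DF i)).card
        ≤ hDfin.toFinset.card := by
      apply Finset.card_le_card_of_injOn ψ
      · intro i hi
        rw [Finset.mem_coe, Set.Finite.mem_toFinset]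
        exact (hψ i hi).1
      · intro i hi i' hi' heq
        by_contra hne2
        have hiF : i ∈ (Finset.range B.length).filter (fun i => ¬ DF i) :=
          Finset.mem_coe.1 hi
        have hi'F : i' ∈ (Finset.range B.length).filter (fun i => ¬ DF i) :=
          Finset.mem_coe.1 hi'
        have hilt : i < B.length := Finset.mem_range.1 (Finset.mem_filter.1 hiF).1
        have hi'lt : i' < B.length := Finset.mem_range.1 (Finset.mem_filter.1 hi'F).1
        exact blocks_disjoint hvB.nodup hne2 hilt hi'lt (hψ i hiF).2
          (heq ▸ (hψ i' hi'F).2)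
    have heq2 : hDfin.toFinset.card
        = ((fun e => (G.ends e).1) '' (eCross G A)
          ∪ (fun e => (G.ends e).2) '' (eCross G A)).ncard :=
      (Set.ncard_eq_toFinset_card _ hDfin).symm
    omega
  -- final arithmetic
  have hmul1 : (((Finset.range B.length).filter (fun i => ¬ DF i)).card + 1)
        * (2 * k + 1 + 1) ≤ (2 * ℓ + 1) * (2 * k + 2) :=
    Nat.mul_le_mul (by omega) (by omega)
  have hmul2 : (2 * ℓ + 1) * (2 * k + 2) ≤ (2 * ℓ + 1) * (2 * k + 3) :=
    Nat.mul_le_mul_left _ (by omega)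
  omega
end

section
/- Let k, ℓ be positive integers and let 𝐀 = (A, x̄) and 𝐁 = (B, ȳ) be two k-boundaried graphs. Let σ be an ordering of the vertices of 𝐀 ⊕ 𝐁 with an ℓ-bucketing T. If the bucket T^{-1}(i) contains no vertex of A, for some i ∈ [ℓ], then width(𝐀⊕𝐁, σ, T, i) = width(A, σ|_A, T|_A, i) + width(B*, σ|_{B*}, T|_{B*}, i), where in B* each extension vertex y_j' is identified with the vertex x_j of A (so T|_{B*}(y_j') = T(x_j) and y_j' is placed in σ|_{B*} at the position of x_j in σ). -/
lemma ncard_sum_split {α β : Type*} [Finite α] [Finite β] (P : α ⊕ β → Prop) :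
    {x : α ⊕ β | P x}.ncard =
      {a : α | P (Sum.inl a)}.ncard + {b : β | P (Sum.inr b)}.ncard := by
  rw [← Nat.card_coe_set_eq, ← Nat.card_coe_set_eq, ← Nat.card_coe_set_eq,
    ← Nat.card_sum]
  exact Nat.card_congr
    { toFun := fun z => match z with
        | ⟨Sum.inl a, h⟩ => Sum.inl ⟨a, h⟩
        | ⟨Sum.inr b, h⟩ => Sum.inr ⟨b, h⟩
      invFun := Sum.elim (fun a => ⟨Sum.inl a.1, a.2⟩) (fun b => ⟨Sum.inr b.1, b.2⟩)
      left_inv := by rintro ⟨(a | b), h⟩ <;> rfl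
      right_inv := by rintro (⟨a, h⟩ | ⟨b, h⟩) <;> rfl }

open Multigraph in
/-- if bucket `i` contains no vertex of `A`, then the width of bucket `i`
in `𝐀 ⊕ 𝐁` is the sum of its width relative to `A` and relative to `B*` (where the
extension vertex `y_j'` of `B*` is identified with the vertex `x_j` of `A`). -/
theorem bucketWidth_join_eq_add
    (k ℓ : ℕ) (hk : 1 ≤ k) (hℓ : 1 ≤ ℓ)
    (A B : Multigraph) (x : Fin k → A.V) (y : Fin k → B.V)
    (ρ : (join A B x y).V → ℕ) (hρ : Function.Injective ρ)
    (T : (join A B x y).V → ℕ) (hT : (join A B x y).IsBucketing ρ ℓ T)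
    (i : ℕ) (hi : i ∈ Set.Icc 1 ℓ)
    (hbucket : ∀ v : A.V, T (Sum.inl v) ≠ i) :
    (join A B x y).bucketWidth ρ T i =
      A.bucketWidth (fun v => ρ (Sum.inl v)) (fun v => T (Sum.inl v)) i +
      (B.extension y).bucketWidth
        (Sum.elim (fun v => ρ (Sum.inr v)) (fun j => ρ (Sum.inl (x j))))
        (Sum.elim (fun v => T (Sum.inr v)) (fun j => T (Sum.inl (x j)))) i := by
  classical
  -- abbreviations
  set ρ' : (B.extension y).V → ℕ :=
    Sum.elim (fun v => ρ (Sum.inr v)) (fun j => ρ (Sum.inl (x j))) with hρ'def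
  set T' : (B.extension y).V → ℕ :=
    Sum.elim (fun v => T (Sum.inr v)) (fun j => T (Sum.inl (x j))) with hT'def
  set SA0 : Set A.V := {a | T (Sum.inl a) < i} with hSA0
  set cA : ℕ := A.delta SA0 with hcA
  -- the width sets
  set WG : Set ℕ := {w | ∃ S : Set (join A B x y).V,
    (∀ v, T v < i → v ∈ S) ∧ (∀ v ∈ S, T v ≤ i) ∧
    (∀ u v, T u = i → T v = i → ρ u ≤ ρ v → v ∈ S → u ∈ S) ∧
    w = (join A B x y).delta S} with hWG
  set WB : Set ℕ := {w | ∃ S : Set (B.extension y).V,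
    (∀ v, T' v < i → v ∈ S) ∧ (∀ v ∈ S, T' v ≤ i) ∧
    (∀ u v, T' u = i → T' v = i → ρ' u ≤ ρ' v → v ∈ S → u ∈ S) ∧
    w = (B.extension y).delta S} with hWB
  -- the A-side width is exactly cA
  have hAwidth : A.bucketWidth (fun v => ρ (Sum.inl v)) (fun v => T (Sum.inl v)) i = cA := by
    have : {w | ∃ S : Set A.V,
        (∀ v, T (Sum.inl v) < i → v ∈ S) ∧ (∀ v ∈ S, T (Sum.inl v) ≤ i) ∧
        (∀ u v, T (Sum.inl u) = i → T (Sum.inl v) = i →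
          ρ (Sum.inl u) ≤ ρ (Sum.inl v) → v ∈ S → u ∈ S) ∧
        w = A.delta S} = {cA} := by
      ext w
      constructor
      · rintro ⟨S, h1, h2, _, rfl⟩
        have hS : S = SA0 := by
          ext a
          constructor
          · intro ha
            exact lt_of_le_of_ne (h2 a ha) (hbucket a)
          · intro ha
            exact h1 a ha
        simp [hS, hcA]
      · rintro rfl
        refine ⟨SA0, fun v hv => hv, fun v hv => le_of_lt hv, ?_, rfl⟩
        intro u v hu hv _ hvS
        exact absurd hv (by simpa [hSA0] using ne_of_lt hvS)
    rw [Multigraph.bucketWidth, this, csSup_singleton]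
  -- the delta splitting lemma
  have hdelta : ∀ (S : Set (join A B x y).V) (S' : Set (B.extension y).V),
      (∀ a : A.V, (Sum.inl a ∈ S ↔ a ∈ SA0)) →
      (∀ b : B.V, (Sum.inr b ∈ S ↔ Sum.inl b ∈ S')) →
      (∀ j : Fin k, (Sum.inr j ∈ S' ↔ T (Sum.inl (x j)) < i)) →
      (join A B x y).delta S = cA + (B.extension y).delta S' := by
    intro S S' hA hB hj
    have e1 : (join A B x y).delta S =
        {e : A.E | ¬ (((join A B x y).ends (Sum.inl (Sum.inl e))).1 ∈ S ↔
          ((join A B x y).ends (Sum.inl (Sum.inl e))).2 ∈ S)}.ncard +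
        {e : B.E | ¬ (((join A B x y).ends (Sum.inl (Sum.inr e))).1 ∈ S ↔
          ((join A B x y).ends (Sum.inl (Sum.inr e))).2 ∈ S)}.ncard +
        {j : Fin k | ¬ (((join A B x y).ends (Sum.inr j)).1 ∈ S ↔
          ((join A B x y).ends (Sum.inr j)).2 ∈ S)}.ncard := by
      have h0 : (join A B x y).delta S =
          {e : (A.E ⊕ B.E) ⊕ Fin k | ¬ (((join A B x y).ends e).1 ∈ S ↔
            ((join A B x y).ends e).2 ∈ S)}.ncard := rfl
      rw [h0, ncard_sum_split, ncard_sum_split]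
    have e2 : (B.extension y).delta S' =
        {e : B.E | ¬ (((B.extension y).ends (Sum.inl e)).1 ∈ S' ↔
          ((B.extension y).ends (Sum.inl e)).2 ∈ S')}.ncard +
        {j : Fin k | ¬ (((B.extension y).ends (Sum.inr j)).1 ∈ S' ↔
          ((B.extension y).ends (Sum.inr j)).2 ∈ S')}.ncard := by
      have h0 : (B.extension y).delta S' =
          {e : B.E ⊕ Fin k | ¬ (((B.extension y).ends e).1 ∈ S' ↔
            ((B.extension y).ends e).2 ∈ S')}.ncard := rfl
      rw [h0, ncard_sum_split]
    rw [e1, e2, hcA, Multigraph.delta]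
    have hAE : {e : A.E | ¬ (((join A B x y).ends (Sum.inl (Sum.inl e))).1 ∈ S ↔
          ((join A B x y).ends (Sum.inl (Sum.inl e))).2 ∈ S)} =
        {e : A.E | ¬ ((A.ends e).1 ∈ SA0 ↔ (A.ends e).2 ∈ SA0)} := by
      ext e
      simp only [Multigraph.join, Set.mem_setOf_eq, Sum.elim_inl, Sum.elim_inr, hA]
      exact not_congr (iff_congr (hA _) (hA _))
    have hBE : {e : B.E | ¬ (((join A B x y).ends (Sum.inl (Sum.inr e))).1 ∈ S ↔
          ((join A B x y).ends (Sum.inl (Sum.inr e))).2 ∈ S)} =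
        {e : B.E | ¬ (((B.extension y).ends (Sum.inl e)).1 ∈ S' ↔
          ((B.extension y).ends (Sum.inl e)).2 ∈ S')} := by
      ext e
      simp only [Multigraph.join, Multigraph.extension, Set.mem_setOf_eq,
        Sum.elim_inl, Sum.elim_inr, hB]
      exact not_congr (iff_congr (hB _) (hB _))
    have hJE : {j : Fin k | ¬ (((join A B x y).ends (Sum.inr j)).1 ∈ S ↔
          ((join A B x y).ends (Sum.inr j)).2 ∈ S)} =
        {j : Fin k | ¬ (((B.extension y).ends (Sum.inr j)).1 ∈ S' ↔
          ((B.extension y).ends (Sum.inr j)).2 ∈ S')} := by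
      ext j
      simp only [Multigraph.join, Multigraph.extension, Set.mem_setOf_eq,
        Sum.elim_inl, Sum.elim_inr, hA, hB, hj, hSA0]
      exact not_congr ((iff_congr ((hA _).trans (hj _).symm) (hB _)).trans Iff.comm)
    rw [hAE, hBE, hJE]
    omega
  -- WG is the translate of WB by cA
  have hWGeq : WG = (fun w => cA + w) '' WB := by
    ext w
    constructor
    · rintro ⟨S, h1, h2, h3, rfl⟩
      set S' : Set (B.extension y).V :=
        {v | Sum.elim (fun b => Sum.inr b ∈ S) (fun j => T (Sum.inl (x j)) < i) v} with hS'
      have hmA : ∀ a : A.V, (Sum.inl a ∈ S ↔ a ∈ SA0) := by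
        intro a
        constructor
        · intro ha
          exact lt_of_le_of_ne (h2 _ ha) (hbucket a)
        · intro ha
          exact h1 _ ha
      have hmB : ∀ b : B.V, (Sum.inr b ∈ S ↔ Sum.inl b ∈ S') := fun b => Iff.rfl
      have hmJ : ∀ j : Fin k, (Sum.inr j ∈ S' ↔ T (Sum.inl (x j)) < i) := fun j => Iff.rfl
      refine ⟨(B.extension y).delta S', ⟨S', ?_, ?_, ?_, rfl⟩, ?_⟩
      · rintro (b | j) hv
        · exact (hmB b).mp (h1 _ hv)
        · exact (hmJ j).mpr hv
      · rintro (b | j) hv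
        · exact h2 _ ((hmB b).mpr hv)
        · exact le_of_lt ((hmJ j).mp hv)
      · rintro (b | j) (b' | j') hu hv hle hvS
        · exact (hmB b).mp (h3 (Sum.inr b) (Sum.inr b') hu hv hle ((hmB b').mpr hvS))
        · exact absurd hv (hbucket (x j'))
        · exact absurd hu (hbucket (x j))
        · exact absurd hu (hbucket (x j))
      · exact (hdelta S S' hmA hmB hmJ).symm
    · rintro ⟨w', ⟨S', c1, c2, c3, rfl⟩, rfl⟩
      set S : Set (join A B x y).V :=
        {v | Sum.elim (fun a => T (Sum.inl a) < i) (fun b => Sum.inl b ∈ S') v} with hS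
      have hmA : ∀ a : A.V, (Sum.inl a ∈ S ↔ a ∈ SA0) := fun a => Iff.rfl
      have hmB : ∀ b : B.V, (Sum.inr b ∈ S ↔ Sum.inl b ∈ S') := fun b => Iff.rfl
      have hmJ : ∀ j : Fin k, (Sum.inr j ∈ S' ↔ T (Sum.inl (x j)) < i) := by
        intro j
        constructor
        · intro hj
          exact lt_of_le_of_ne (c2 _ hj) (hbucket (x j))
        · intro hj
          exact c1 (Sum.inr j) hj
      refine ⟨S, ?_, ?_, ?_, (hdelta S S' hmA hmB hmJ).symm⟩
      · rintro (a | b) hv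
        · exact hv
        · exact (hmB b).mpr (c1 (Sum.inl b) hv)
      · rintro (a | b) hv
        · exact le_of_lt ((hmA a).mp hv)
        · exact c2 _ ((hmB b).mp hv)
      · rintro (a | b) (a' | b') hu hv hle hvS
        · exact absurd hu (hbucket a)
        · exact absurd hu (hbucket a)
        · exact absurd hv (hbucket a')
        · exact (hmB b).mpr (c3 (Sum.inl b) (Sum.inl b') hu hv hle ((hmB b').mp hvS))
  -- WB is nonempty and bounded above
  have hWBne : WB.Nonempty := by
    refine ⟨(B.extension y).delta {v | T' v < i}, {v | T' v < i},
      fun v hv => hv, fun v hv => le_of_lt hv, ?_, rfl⟩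
    intro u v hu hv _ hvS
    exact absurd hv (ne_of_lt hvS)
  have hWBbdd : BddAbove WB := by
    refine ⟨Nat.card (B.extension y).E, ?_⟩
    rintro w ⟨S, _, _, _, rfl⟩
    rw [Multigraph.delta, ← Set.ncard_univ]
    exact Set.ncard_le_ncard (Set.subset_univ _) Set.finite_univ
  have hmemWB : sSup WB ∈ WB := Nat.sSup_mem hWBne hWBbdd
  have himbdd : BddAbove ((fun w => cA + w) '' WB) := by
    obtain ⟨N, hN⟩ := hWBbdd
    refine ⟨cA + N, ?_⟩
    rintro w ⟨w', hw', rfl⟩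
    exact Nat.add_le_add_left (hN hw') cA
  have hsup : sSup WG = cA + sSup WB := by
    rw [hWGeq]
    refine le_antisymm ?_ ?_
    · refine csSup_le ⟨cA + sSup WB, ⟨sSup WB, hmemWB, rfl⟩⟩ ?_
      rintro w ⟨w', hw', rfl⟩
      exact Nat.add_le_add_left (le_csSup hWBbdd hw') cA
    · exact le_csSup himbdd ⟨sSup WB, hmemWB, rfl⟩
  have h1 : (join A B x y).bucketWidth ρ T i = sSup WG := rfl
  have h2 : (B.extension y).bucketWidth ρ' T' i = sSup WB := rfl
  rw [h1, hsup, hAwidth, h2]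
end

section
/- For every graph G, there exists a linked ordering σ of V(G) with cw_σ(G) = cw(G). -/
namespace Multigraph

section LinkedProofAux

open scoped Classical

noncomputable instance instFintypeV (G : Multigraph) : Fintype G.V := Fintype.ofFinite _
noncomputable instance instFintypeE (G : Multigraph) : Fintype G.E := Fintype.ofFinite _

variable {G : Multigraph}

lemma delta_eq_card (S : Set G.V) :
    G.delta S = (Finset.univ.filter
      (fun e => ¬ ((G.ends e).1 ∈ S ↔ (G.ends e).2 ∈ S))).card := by
  rw [delta, ← Set.ncard_coe_finset]
  congr 1
  ext e; simp

/-! ### Flows -/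

def etail (G : Multigraph) (e : G.E) (b : Bool) : G.V := if b then (G.ends e).1 else (G.ends e).2
def ehead (G : Multigraph) (e : G.E) (b : Bool) : G.V := if b then (G.ends e).2 else (G.ends e).1

lemma etail_ne_ehead (e : G.E) (b : Bool) : G.etail e b ≠ G.ehead e b := by
  cases b <;> simp [etail, ehead, G.loopless e, (G.loopless e).symm, Ne.symm (G.loopless e)]

noncomputable def oExc (G : Multigraph) (e : G.E) (w : Option Bool) (v : G.V) : ℤ :=
  match w with
  | none => 0
  | some b => (if G.etail e b = v then 1 else 0) - (if G.ehead e b = v then 1 else 0)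

noncomputable def excess (G : Multigraph) (f : G.E → Option Bool) (v : G.V) : ℤ :=
  ∑ e : G.E, G.oExc e (f e) v

lemma excess_update (f : G.E → Option Bool) (e₀ : G.E) (w : Option Bool) (v : G.V) :
    G.excess (Function.update f e₀ w) v
      = G.excess f v - G.oExc e₀ (f e₀) v + G.oExc e₀ w v := by
  unfold excess
  rw [Finset.sum_eq_sum_sdiff_singleton_add (Finset.mem_univ e₀)
      (fun e => G.oExc e (Function.update f e₀ w e) v),
    Finset.sum_eq_sum_sdiff_singleton_add (Finset.mem_univ e₀) (fun e => G.oExc e (f e) v)]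
  have : ∀ e ∈ Finset.univ \ {e₀}, G.oExc e (Function.update f e₀ w e) v = G.oExc e (f e) v := by
    intro e he
    simp only [Finset.mem_sdiff, Finset.mem_singleton] at he
    rw [Function.update_of_ne he.2]
  rw [Finset.sum_congr rfl this, Function.update_self]
  ring

def RStep (G : Multigraph) (f : G.E → Option Bool) (e : G.E) (a b : G.V) : Prop :=
  (f e = none ∧ (G.ends e = (a, b) ∨ G.ends e = (b, a))) ∨
  (∃ c, f e = some c ∧ G.etail e c = b ∧ G.ehead e c = a)

lemma RStep.ne {f : G.E → Option Bool} {e : G.E} {a b : G.V} (h : G.RStep f e a b) : a ≠ b := by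
  rcases h with ⟨-, h | h⟩ | ⟨c, -, ht, hh⟩
  · exact fun hab => G.loopless e (by rw [h]; simpa using hab)
  · exact fun hab => G.loopless e (by rw [h]; simpa using hab.symm)
  · rw [← ht, ← hh]; exact (G.etail_ne_ehead e c).symm

noncomputable def flipVal (G : Multigraph) (f : G.E → Option Bool) (e : G.E) (a : G.V) :
    Option Bool :=
  if f e = none then (if (G.ends e).1 = a then some true else some false) else none

noncomputable def other (G : Multigraph) (e : G.E) (a : G.V) : G.V :=
  if (G.ends e).1 = a then (G.ends e).2 else (G.ends e).1

lemma RStep.other_eq {f : G.E → Option Bool} {e : G.E} {a b : G.V} (h : G.RStep f e a b) :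
    G.other e a = b := by
  have hne := G.loopless e
  have hab := h.ne
  rcases h with ⟨-, h | h⟩ | ⟨c, -, ht, hh⟩
  · rw [other, h]; simp
  · rw [other, h]; simp only [Prod.fst, Prod.snd]
    rw [if_neg (by exact fun hba => hab (by simpa [h] using hba.symm))]
  · cases c <;> simp only [etail, ehead, if_true, if_false, Bool.false_eq_true] at ht hh
    · rw [other, if_pos hh]; exact ht
    · rw [other, if_neg (fun h => hab ((ht ▸ h : b = a)).symm)]; exact ht

lemma oExc_flipVal {f : G.E → Option Bool} {e : G.E} {a b : G.V} (h : G.RStep f e a b)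
    (v : G.V) :
    G.oExc e (G.flipVal f e a) v
      = G.oExc e (f e) v + (if v = a then 1 else 0) - (if v = b then 1 else 0) := by
  have hne := G.loopless e
  have hab := h.ne
  rcases h with ⟨h0, h | h⟩ | ⟨c, hc, ht, hh⟩
  · rw [flipVal, if_pos h0, h0, if_pos (by rw [h])]
    simp only [oExc, etail, ehead, if_true, h]
    by_cases hva : v = a <;> by_cases hvb : v = b <;>
      simp_all [eq_comm] <;> omega
  · have h1 : (G.ends e).1 ≠ a := by
      rw [h]; exact fun hba => hab (by simpa [h] using hba.symm)
    rw [flipVal, if_pos h0, if_neg h1, h0]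
    simp only [oExc, etail, ehead, if_false, h, Bool.false_eq_true]
    by_cases hva : v = a <;> by_cases hvb : v = b <;>
      simp_all [eq_comm] <;> omega
  · rw [flipVal, if_neg (by rw [hc]; simp), hc]
    have hth := G.etail_ne_ehead e c
    simp only [oExc, ht, hh]
    by_cases hva : v = a <;> by_cases hvb : v = b <;>
      simp_all [eq_comm] <;> omega

lemma excess_flip {f : G.E → Option Bool} {e : G.E} {a b : G.V} (h : G.RStep f e a b)
    (v : G.V) :
    G.excess (Function.update f e (G.flipVal f e a)) v
      = G.excess f v + (if v = a then 1 else 0) - (if v = b then 1 else 0) := by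
  rw [excess_update, oExc_flipVal h]
  ring

def IsRW (G : Multigraph) (f : G.E → Option Bool) : G.V → List G.E → G.V → Prop
  | a, [], b => a = b
  | a, e :: l, b => ∃ c, G.RStep f e a c ∧ G.IsRW f c l b

noncomputable def flipAlong (G : Multigraph) :
    (G.E → Option Bool) → G.V → List G.E → (G.E → Option Bool)
  | f, _, [] => f
  | f, a, e :: l => G.flipAlong (Function.update f e (G.flipVal f e a)) (G.other e a) l

lemma RStep.congr {f g : G.E → Option Bool} {e : G.E} {a b : G.V}
    (hfg : f e = g e) (h : G.RStep f e a b) : G.RStep g e a b := by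
  rw [RStep, ← hfg]; exact h

lemma IsRW.congr {f g : G.E → Option Bool} :
    ∀ {a : G.V} {l : List G.E} {b : G.V}, (∀ e ∈ l, f e = g e) →
      G.IsRW f a l b → G.IsRW g a l b
  | a, [], b, _, h => h
  | a, e :: l, b, hfg, ⟨c, hs, hw⟩ =>
    ⟨c, hs.congr (hfg e (by simp)), hw.congr fun e' he' => hfg e' (by simp [he'])⟩

lemma flipAlong_excess :
    ∀ (l : List G.E) (f : G.E → Option Bool) (a b : G.V), G.IsRW f a l b → l.Nodup →
      ∀ v, G.excess (G.flipAlong f a l) v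
        = G.excess f v + (if v = a then 1 else 0) - (if v = b then 1 else 0)
  | [], f, a, b, hab, _, v => by
    cases (hab : a = b); simp [flipAlong]
  | e :: l, f, a, b, ⟨c, hs, hw⟩, hnd, v => by
    have hco : G.other e a = c := hs.other_eq
    have hnd' := (List.nodup_cons.mp hnd)
    have hw' : G.IsRW (Function.update f e (G.flipVal f e a)) c l b :=
      hw.congr fun e' he' =>
        (Function.update_of_ne (fun h => hnd'.1 (by rw [← h]; exact he')) _ _).symm
    have := flipAlong_excess l (Function.update f e (G.flipVal f e a)) c b
      (hco ▸ hw') hnd'.2 v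
    rw [flipAlong, hco, this, excess_flip hs]
    ring

inductive Reach (G : Multigraph) (f : G.E → Option Bool) (X : Set G.V) : G.V → Prop
  | base {x : G.V} : x ∈ X → Reach G f X x
  | step {a b : G.V} {e : G.E} : Reach G f X a → G.RStep f e a b → Reach G f X b

lemma IsRW.append {f : G.E → Option Bool} :
    ∀ {a : G.V} {l : List G.E} {b c : G.V} {e : G.E},
      G.IsRW f a l b → G.RStep f e b c → G.IsRW f a (l ++ [e]) c
  | a, [], b, c, e, hab, hs => by cases (hab : a = b); exact ⟨c, hs, rfl⟩
  | a, e' :: l, b, c, e, ⟨d, hs', hw⟩, hs => ⟨d, hs', hw.append hs⟩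

lemma IsRW.split {f : G.E → Option Bool} :
    ∀ {l₁ : List G.E} {a b : G.V} {e : G.E} {l₂ : List G.E},
      G.IsRW f a (l₁ ++ e :: l₂) b →
      ∃ p q, G.IsRW f a l₁ p ∧ G.RStep f e p q ∧ G.IsRW f q l₂ b
  | [], a, b, e, l₂, ⟨c, hs, hw⟩ => ⟨a, c, rfl, hs, hw⟩
  | e' :: l₁, a, b, e, l₂, ⟨c, hs', hw⟩ =>
    let ⟨p, q, h1, h2, h3⟩ := hw.split
    ⟨p, q, ⟨c, hs', h1⟩, h2, h3⟩

/-- Two residual uses of the same edge. -/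
lemma RStep.dup {f : G.E → Option Bool} {e : G.E} {a b p q : G.V}
    (h1 : G.RStep f e a b) (h2 : G.RStep f e p q) : (p = a ∧ q = b) ∨ p = b := by
  rcases h1 with ⟨h0, h | h⟩ | ⟨c, hc, ht, hh⟩ <;>
    rcases h2 with ⟨h0', h' | h'⟩ | ⟨c', hc', ht', hh'⟩
  · have := h.symm.trans h'; injection this with e1 e2; exact .inl ⟨e1.symm, e2.symm⟩
  · have := h.symm.trans h'; injection this with e1 e2; exact .inr e2.symm
  · simp [h0] at hc'
  · have := h.symm.trans h'; injection this with e1 e2; exact .inr e1.symm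
  · have := h.symm.trans h'; injection this with e1 e2; exact .inl ⟨e2.symm, e1.symm⟩
  · simp [h0] at hc'
  · simp [h0'] at hc
  · simp [h0'] at hc
  · have hcc : c' = c := by have := hc.symm.trans hc'; injection this with h; exact h.symm
    subst hcc
    exact .inl ⟨hh'.symm.trans hh, ht'.symm.trans ht⟩

lemma reach_rw {f : G.E → Option Bool} {X : Set G.V} {b : G.V} (h : G.Reach f X b) :
    ∃ x ∈ X, ∃ l : List G.E, l.Nodup ∧ G.IsRW f x l b := by
  induction h with
  | base hx => exact ⟨_, hx, [], List.nodup_nil, rfl⟩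
  | @step a b e _ hs ih =>
    obtain ⟨x, hx, l, hnd, hw⟩ := ih
    by_cases hel : e ∈ l
    · obtain ⟨l₁, l₂, rfl⟩ := List.append_of_mem hel
      obtain ⟨p, q, h1, h2, h3⟩ := hw.split
      have hnd₁ : l₁.Nodup := (List.nodup_append'.mp hnd).1
      have hel₁ : e ∉ l₁ := fun hmem =>
        (List.disjoint_left.mp (List.nodup_append'.mp hnd).2.2) hmem (by simp)
      rcases hs.dup h2 with ⟨rfl, rfl⟩ | rfl
      · exact ⟨x, hx, l₁ ++ [e], by simp [List.nodup_append, hnd₁, hel₁]; exact fun a ha h => hel₁ (h ▸ ha), h1.append hs⟩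
      · exact ⟨x, hx, l₁, hnd₁, h1⟩
    · exact ⟨x, hx, l ++ [e], by simp [List.nodup_append, hnd, hel]; exact fun a ha h => hel (h ▸ ha), hw.append hs⟩

noncomputable def fval (G : Multigraph) (f : G.E → Option Bool) (X : Set G.V) : ℤ :=
  ∑ v ∈ Finset.univ.filter (· ∈ X), G.excess f v

def IsFlow (G : Multigraph) (f : G.E → Option Bool) (X Y : Set G.V) : Prop :=
  (∀ v, v ∉ X → v ∉ Y → G.excess f v = 0) ∧ ∀ v ∈ X, 0 ≤ G.excess f v

noncomputable def eSign (G : Multigraph) (f : G.E → Option Bool) (S : Set G.V) (e : G.E) : ℤ :=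
  (if ∃ b, f e = some b ∧ G.etail e b ∈ S then 1 else 0)
    - (if ∃ b, f e = some b ∧ G.ehead e b ∈ S then 1 else 0)

lemma sum_excess (f : G.E → Option Bool) (S : Set G.V) :
    ∑ v ∈ Finset.univ.filter (· ∈ S), G.excess f v = ∑ e : G.E, G.eSign f S e := by
  unfold excess
  rw [Finset.sum_comm]
  refine Finset.sum_congr rfl fun e _ => ?_
  rcases he : f e with _ | b
  · simp [oExc, eSign, he]
  · unfold oExc eSign
    rw [he, Finset.sum_sub_distrib]
    congr 1
    · rw [Finset.sum_ite_eq (Finset.univ.filter (· ∈ S)) (G.etail e b) (fun _ => (1:ℤ))]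
      simp
    · rw [Finset.sum_ite_eq (Finset.univ.filter (· ∈ S)) (G.ehead e b) (fun _ => (1:ℤ))]
      simp

lemma exists_aug {f : G.E → Option Bool} {X Y : Set G.V} {m : ℕ} (hXY : Disjoint X Y)
    (hcut : ∀ S : Set G.V, X ⊆ S → Disjoint S Y → m ≤ G.delta S)
    (hf : G.IsFlow f X Y) (hv : G.fval f X < (m : ℤ)) :
    ∃ g, G.IsFlow g X Y ∧ G.fval g X = G.fval f X + 1 := by
  by_cases hy : ∃ y ∈ Y, G.Reach f X y
  · obtain ⟨y, hyY, hr⟩ := hy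
    obtain ⟨x, hxX, l, hnd, hw⟩ := G.reach_rw hr
    have hex := G.flipAlong_excess l f x y hw hnd
    have hxy : x ≠ y := fun h => Set.disjoint_left.mp hXY hxX (h ▸ hyY)
    refine ⟨G.flipAlong f x l, ⟨?_, ?_⟩, ?_⟩
    · intro v hvX hvY
      rw [hex v, hf.1 v hvX hvY, if_neg (fun (h : v = x) => hvX (by rw [h]; exact hxX)),
        if_neg (fun (h : v = y) => hvY (by rw [h]; exact hyY))]
      ring
    · intro v hvX
      have h0 := hf.2 v hvX
      rw [hex v, if_neg (fun (h : v = y) => Set.disjoint_left.mp hXY hvX (by rw [h]; exact hyY))]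
      split_ifs <;> omega
    · unfold fval
      rw [Finset.sum_congr rfl fun v _ => hex v, Finset.sum_sub_distrib,
        Finset.sum_add_distrib, Finset.sum_ite_eq' _ x (fun _ => (1:ℤ)),
        Finset.sum_ite_eq' _ y (fun _ => (1:ℤ)),
        if_pos (Finset.mem_filter.mpr ⟨Finset.mem_univ _, hxX⟩),
        if_neg (fun h => Set.disjoint_left.mp hXY (Finset.mem_filter.mp h).2 hyY)]
      ring
  · exfalso
    set S : Set G.V := {v | G.Reach f X v} with hS
    have hXS : X ⊆ S := fun v hv => Reach.base hv
    have hSY : Disjoint S Y := Set.disjoint_left.mpr fun v hvS hvY => hy ⟨v, hvY, hvS⟩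
    have hm := hcut S hXS hSY
    have hcl : ∀ a, a ∈ S → ∀ e b, G.RStep f e a b → b ∈ S := fun a ha e b hs =>
      Reach.step ha hs
    have h1 : G.fval f X = ∑ v ∈ Finset.univ.filter (· ∈ S), G.excess f v := by
      refine Finset.sum_subset ?_ fun v hv hnv => ?_
      · intro v hv
        simp only [Finset.mem_filter, Finset.mem_univ, true_and] at hv ⊢
        exact hXS hv
      · simp only [Finset.mem_filter, Finset.mem_univ, true_and] at hv hnv
        exact hf.1 v hnv (Set.disjoint_left.mp hSY hv)
    have h3 : ∀ e, G.eSign f S e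
        = if ¬ ((G.ends e).1 ∈ S ↔ (G.ends e).2 ∈ S) then 1 else 0 := by
      intro e
      rcases he : f e with _ | b
      · have hcr : ((G.ends e).1 ∈ S ↔ (G.ends e).2 ∈ S) := by
          constructor
          · intro h1'
            exact hcl _ h1' e _ (Or.inl ⟨he, Or.inl rfl⟩)
          · intro h2'
            exact hcl _ h2' e _ (Or.inl ⟨he, Or.inr rfl⟩)
        simp [eSign, he, hcr]
      · have hstep : G.ehead e b ∈ S → G.etail e b ∈ S := fun hh =>
          hcl _ hh e _ (Or.inr ⟨b, he, rfl, rfl⟩)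
        cases b <;>
          simp only [etail, ehead, if_true, if_false, Bool.false_eq_true] at hstep ⊢ <;>
        · by_cases p1 : (G.ends e).1 ∈ S <;> by_cases p2 : (G.ends e).2 ∈ S <;>
            simp [eSign, he, etail, ehead, p1, p2] <;> tauto
    have h4 : (∑ e : G.E, G.eSign f S e) = (G.delta S : ℤ) := by
      rw [Finset.sum_congr rfl fun e _ => h3 e, delta_eq_card]
      push_cast [Finset.card_filter]
      rfl
    rw [h1, sum_excess, h4] at hv
    omega

lemma exists_flow {X Y : Set G.V} {m : ℕ} (hXY : Disjoint X Y)
    (hcut : ∀ S : Set G.V, X ⊆ S → Disjoint S Y → m ≤ G.delta S) :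
    ∃ f, G.IsFlow f X Y ∧ G.fval f X = (m : ℤ) := by
  suffices h : ∀ j : ℕ, j ≤ m → ∃ f, G.IsFlow f X Y ∧ G.fval f X = (j : ℤ) from h m le_rfl
  intro j
  induction j with
  | zero =>
    intro _
    refine ⟨fun _ => none, ⟨fun v _ _ => ?_, fun v _ => ?_⟩, ?_⟩ <;>
      simp [excess, oExc, fval]
  | succ j ih =>
    intro hj
    obtain ⟨f, hf, hv⟩ := ih (Nat.le_of_succ_le hj)
    obtain ⟨g, hg, hgv⟩ := G.exists_aug hXY hcut hf (by rw [hv]; exact_mod_cast hj)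
    exact ⟨g, hg, by rw [hgv, hv]; push_cast; ring⟩

def FStep (G : Multigraph) (f : G.E → Option Bool) (e : G.E) (a c : G.V) : Prop :=
  ∃ b, f e = some b ∧ G.etail e b = a ∧ G.ehead e b = c

def IsFW (G : Multigraph) (f : G.E → Option Bool) : G.V → List G.E → G.V → Prop
  | a, [], b => a = b
  | a, e :: l, b => ∃ c, G.FStep f e a c ∧ G.IsFW f c l b

lemma IsFW.append {f : G.E → Option Bool} :
    ∀ {a : G.V} {l : List G.E} {b c : G.V} {e : G.E},
      G.IsFW f a l b → G.FStep f e b c → G.IsFW f a (l ++ [e]) c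
  | a, [], b, c, e, hab, hs => by cases (hab : a = b); exact ⟨c, hs, rfl⟩
  | a, e' :: l, b, c, e, ⟨d, hs', hw⟩, hs => ⟨d, hs', hw.append hs⟩

lemma IsFW.oriented {f : G.E → Option Bool} :
    ∀ {a : G.V} {l : List G.E} {b : G.V},
      G.IsFW f a l b → ∀ e ∈ l, ∃ bd, f e = some bd
  | a, [], b, _, e, he => absurd he (by simp)
  | a, e' :: l, b, ⟨c, ⟨bd, hbd, _⟩, hw⟩, e, he => by
    rcases List.mem_cons.mp he with rfl | he
    · exact ⟨bd, hbd⟩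
    · exact hw.oriented e he

lemma IsFW.lsum {f : G.E → Option Bool} :
    ∀ {a : G.V} {l : List G.E} {b : G.V}, G.IsFW f a l b → ∀ v,
      (l.map (fun e => G.oExc e (f e) v)).sum
        = (if v = a then 1 else 0) - (if v = b then 1 else 0)
  | a, [], b, hab, v => by cases (hab : a = b); simp
  | a, e :: l, b, ⟨c, ⟨bd, hbd, ht, hh⟩, hw⟩, v => by
    have h1 : G.oExc e (f e) v = (if v = a then 1 else 0) - (if v = c then 1 else 0) := by
      simp only [oExc, hbd, ht, hh]
      by_cases hva : v = a <;> by_cases hvc : v = c <;> simp_all [eq_comm]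
    have h2 := hw.lsum v
    simp only [List.map_cons, List.sum_cons, h1, h2]
    ring

lemma excess_eq_cards (f : G.E → Option Bool) (v : G.V) :
    G.excess f v
      = ((Finset.univ.filter (fun e => ∃ b, f e = some b ∧ G.etail e b = v)).card : ℤ)
        - (Finset.univ.filter (fun e => ∃ b, f e = some b ∧ G.ehead e b = v)).card := by
  unfold excess
  push_cast [Finset.card_filter]
  rw [← Finset.sum_sub_distrib]
  refine Finset.sum_congr rfl fun e _ => ?_
  rcases he : f e with _ | b <;> simp [oExc, he]

lemma lsum_eq_cards {f : G.E → Option Bool} {l : List G.E} (hnd : l.Nodup) (v : G.V) :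
    (l.map (fun e => G.oExc e (f e) v)).sum
      = ((l.toFinset.filter (fun e => ∃ b, f e = some b ∧ G.etail e b = v)).card : ℤ)
        - (l.toFinset.filter (fun e => ∃ b, f e = some b ∧ G.ehead e b = v)).card := by
  rw [← List.sum_toFinset _ hnd]
  push_cast [Finset.card_filter]
  rw [← Finset.sum_sub_distrib]
  refine Finset.sum_congr rfl fun e _ => ?_
  rcases he : f e with _ | b <;> simp [oExc, he]

lemma fw_extend {f : G.E → Option Bool} {X Y : Set G.V} (hf : G.IsFlow f X Y)
    {a : G.V} {l : List G.E} {b : G.V} (ha : a ∈ X) (hexa : 1 ≤ G.excess f a)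
    (hw : G.IsFW f a l b) (hnd : l.Nodup) (hbY : b ∉ Y) :
    ∃ e, e ∉ l ∧ ∃ c, G.FStep f e b c := by
  by_contra hno
  push_neg at hno
  have hall : ∀ e, (∃ bd, f e = some bd ∧ G.etail e bd = b) → e ∈ l := by
    intro e hout
    by_contra hel
    obtain ⟨bd, hbd, ht⟩ := hout
    exact hno e hel (G.ehead e bd) ⟨bd, hbd, ht, rfl⟩
  have hOut : (Finset.univ.filter (fun e => ∃ bd, f e = some bd ∧ G.etail e bd = b))
      = l.toFinset.filter (fun e => ∃ bd, f e = some bd ∧ G.etail e bd = b) := by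
    apply Finset.ext
    intro e
    simp only [Finset.mem_filter, Finset.mem_univ, true_and, List.mem_toFinset]
    exact ⟨fun h => ⟨hall e h, h⟩, fun h => h.2⟩
  have hIn : (l.toFinset.filter (fun e => ∃ bd, f e = some bd ∧ G.ehead e bd = b)).card
      ≤ (Finset.univ.filter (fun e => ∃ bd, f e = some bd ∧ G.ehead e bd = b)).card := by
    apply Finset.card_le_card
    intro e he
    simp only [Finset.mem_filter, List.mem_toFinset] at he ⊢
    exact ⟨Finset.mem_univ _, he.2⟩
  have hl := (hw.lsum b).symm.trans (G.lsum_eq_cards hnd b)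
  have hexb := G.excess_eq_cards f b
  rw [hOut] at hexb
  rcases eq_or_ne b a with hba | hba
  · subst hba
    omega
  · rw [if_neg hba, if_pos (rfl : b = b)] at hl
    rcases em (b ∈ X) with hbX | hbX
    · have := hf.2 b hbX; omega
    · have := hf.1 b hbX hbY; omega

lemma fw_to_Y {f : G.E → Option Bool} {X Y : Set G.V} (hf : G.IsFlow f X Y)
    (hXY : Disjoint X Y) {a : G.V} (ha : a ∈ X) (hexa : 1 ≤ G.excess f a) :
    ∃ y ∈ Y, ∃ l, l.Nodup ∧ G.IsFW f a l y := by
  suffices h : ∀ (fuel : ℕ) (l : List G.E) (b : G.V), G.IsFW f a l b → l.Nodup →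
      Fintype.card G.E ≤ l.length + fuel → ∃ y ∈ Y, ∃ l', l'.Nodup ∧ G.IsFW f a l' y by
    exact h (Fintype.card G.E) [] a rfl List.nodup_nil (by simp)
  intro fuel
  induction fuel with
  | zero =>
    intro l b hw hnd hlen
    by_cases hbY : b ∈ Y
    · exact ⟨b, hbY, l, hnd, hw⟩
    · exfalso
      obtain ⟨e, hel, c, hst⟩ := G.fw_extend hf ha hexa hw hnd hbY
      have h1 : (insert e l.toFinset).card ≤ Fintype.card G.E := Finset.card_le_univ _
      rw [Finset.card_insert_of_notMem (by simpa using hel),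
        List.toFinset_card_of_nodup hnd] at h1
      omega
  | succ k ih =>
    intro l b hw hnd hlen
    by_cases hbY : b ∈ Y
    · exact ⟨b, hbY, l, hnd, hw⟩
    · obtain ⟨e, hel, c, hst⟩ := G.fw_extend hf ha hexa hw hnd hbY
      refine ih (l ++ [e]) c (hw.append hst) ?_ ?_
      · simp [List.nodup_append, hnd, hel]; exact fun a ha h => hel (h ▸ ha)
      · simp only [List.length_append, List.length_cons, List.length_nil]
        omega

lemma IsFW.toWalk {f : G.E → Option Bool} :
    ∀ {a : G.V} {l : List G.E} {b : G.V}, G.IsFW f a l b →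
      ∃ w : G.Walk a b, w.edges = l
  | a, [], b, hab => by cases (hab : a = b); exact ⟨.nil a, rfl⟩
  | a, e :: l, b, ⟨c, ⟨bd, hbd, ht, hh⟩, hw⟩ => by
    obtain ⟨w', hw'⟩ := hw.toWalk
    have hor : G.ends e = (a, c) ∨ G.ends e = (c, a) := by
      cases bd <;> simp only [etail, ehead, if_true, if_false, Bool.false_eq_true] at ht hh
      · right; rw [← hh, ← ht]
      · left; rw [← ht, ← hh]
    exact ⟨.cons e hor w', by simp [Walk.edges, hw']⟩

lemma walk_drop : ∀ {a b : G.V} (w : G.Walk a b) (u : G.V), u ∈ w.support →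
    ∃ w' : G.Walk u b, (∀ e ∈ w'.edges, e ∈ w.edges) ∧ w'.support.Sublist w.support := by
  intro a b w
  induction w with
  | nil v =>
    intro u hu
    simp only [Walk.support, List.mem_singleton] at hu
    subst hu
    exact ⟨.nil u, fun e he => he, List.Sublist.refl _⟩
  | @cons a' v' w' e h p ih =>
    intro u hu
    rcases List.mem_cons.mp (by simpa [Walk.support] using hu) with rfl | hu'
    · exact ⟨.cons e h p, fun _ he => he, List.Sublist.refl _⟩
    · obtain ⟨q, h1, h2⟩ := ih u hu'
      exact ⟨q, fun e' he' => List.mem_cons_of_mem _ (h1 e' he'),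
        h2.trans (List.sublist_cons_self _ _)⟩

lemma walk_to_path : ∀ {a b : G.V} (w : G.Walk a b),
    ∃ p : G.Walk a b, p.support.Nodup ∧ ∀ e ∈ p.edges, e ∈ w.edges := by
  intro a b w
  induction w with
  | nil v => exact ⟨.nil v, by simp [Walk.support], by simp⟩
  | @cons a' v' w' e h p ih =>
    obtain ⟨p', hnd, hsub⟩ := ih
    by_cases hu : a' ∈ p'.support
    · obtain ⟨q, h1, h2⟩ := G.walk_drop p' a' hu
      exact ⟨q, h2.nodup hnd, fun e' he' =>
        List.mem_cons_of_mem _ (hsub e' (h1 e' he'))⟩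
    · refine ⟨.cons e h p', by simp [Walk.support, hnd, hu], fun e' he' => ?_⟩
      rcases List.mem_cons.mp (by simpa [Walk.edges] using he') with rfl | he''
      · exact List.mem_cons_self
      · exact List.mem_cons_of_mem _ (hsub e' he'')

lemma flow_decompose {X Y : Set G.V} (hXY : Disjoint X Y) :
    ∀ (m : ℕ) (f : G.E → Option Bool), G.IsFlow f X Y → G.fval f X = (m : ℤ) →
    ∃ L : List (Σ a : G.V, Σ b : G.V, G.Walk a b),
      L.length = m ∧
      (∀ w ∈ L, w.1 ∈ X ∧ w.2.1 ∈ Y ∧ w.2.2.support.Nodup ∧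
        ∀ e ∈ w.2.2.edges, f e ≠ none) ∧
      L.Pairwise (fun w₁ w₂ => ∀ e ∈ w₁.2.2.edges, e ∉ w₂.2.2.edges) := by
  intro m
  induction m with
  | zero => exact fun f _ _ => ⟨[], rfl, by simp, by simp⟩
  | succ m ih =>
    intro f hf hv
    have hx : ∃ x ∈ Finset.univ.filter (· ∈ X), (0:ℤ) < G.excess f x := by
      by_contra hno
      push_neg at hno
      have : G.fval f X ≤ 0 := Finset.sum_nonpos hno
      omega
    obtain ⟨x, hxF, hxe⟩ := hx
    have hxX : x ∈ X := (Finset.mem_filter.mp hxF).2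
    obtain ⟨y, hyY, l, hnd, hw⟩ := G.fw_to_Y hf hXY hxX hxe
    set g : G.E → Option Bool := fun e => if e ∈ l then none else f e with hg
    have hge : ∀ v, G.excess g v
        = G.excess f v - ((if v = x then 1 else 0) - (if v = y then 1 else 0)) := by
      intro v
      have hsum : ∑ e ∈ l.toFinset, G.oExc e (f e) v
          = (if v = x then 1 else 0) - (if v = y then 1 else 0) := by
        rw [List.sum_toFinset _ hnd]
        exact hw.lsum v
      unfold excess
      rw [← Finset.sum_sdiff (Finset.subset_univ l.toFinset),
        ← Finset.sum_sdiff (Finset.subset_univ l.toFinset) (f := fun e => G.oExc e (f e) v),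
        hsum]
      have e1 : ∑ e ∈ Finset.univ \ l.toFinset, G.oExc e (g e) v
          = ∑ e ∈ Finset.univ \ l.toFinset, G.oExc e (f e) v := by
        refine Finset.sum_congr rfl fun e he => ?_
        simp only [Finset.mem_sdiff, List.mem_toFinset] at he
        rw [hg]; simp only [if_neg he.2]
      have e2 : ∑ e ∈ l.toFinset, G.oExc e (g e) v = 0 := by
        refine Finset.sum_eq_zero fun e he => ?_
        simp only [List.mem_toFinset] at he
        rw [hg]; simp only [if_pos he, oExc]
      rw [e1, e2]
      ring
    have hxy : x ≠ y := fun h => Set.disjoint_left.mp hXY hxX (h ▸ hyY)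
    have hgf : G.IsFlow g X Y := by
      constructor
      · intro v hvX hvY
        rw [hge v, hf.1 v hvX hvY, if_neg (fun (h : v = x) => hvX (by rw [h]; exact hxX)),
          if_neg (fun (h : v = y) => hvY (by rw [h]; exact hyY))]
        ring
      · intro v hvX
        have := hf.2 v hvX
        rw [hge v, if_neg (fun (h : v = y) => Set.disjoint_left.mp hXY hvX (by rw [h]; exact hyY))]
        split_ifs with h
        · subst h; omega
        · omega
    have hgv : G.fval g X = (m : ℤ) := by
      unfold fval
      rw [Finset.sum_congr rfl fun v _ => hge v]
      rw [Finset.sum_sub_distrib, Finset.sum_sub_distrib,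
        Finset.sum_ite_eq' _ x (fun _ => (1:ℤ)), Finset.sum_ite_eq' _ y (fun _ => (1:ℤ)),
        if_pos hxF,
        if_neg (fun h => Set.disjoint_left.mp hXY (Finset.mem_filter.mp h).2 hyY)]
      have := hv
      unfold fval at this
      push_cast at this ⊢
      omega
    obtain ⟨L', hlen', hmem', hpw'⟩ := ih g hgf hgv
    obtain ⟨w₀, hw₀⟩ := hw.toWalk
    obtain ⟨p₀, hp₀nd, hp₀sub⟩ := G.walk_to_path w₀
    have hp₀l : ∀ e ∈ p₀.edges, e ∈ l := fun e he => hw₀ ▸ hp₀sub e he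
    refine ⟨⟨x, y, p₀⟩ :: L', by simp [hlen'], ?_, ?_⟩
    · intro w hwmem
      rcases List.mem_cons.mp hwmem with rfl | hwL
      · exact ⟨hxX, hyY, hp₀nd, fun e he => by
          obtain ⟨bd, hbd⟩ := hw.oriented e (hp₀l e he)
          simp [hbd]⟩
      · obtain ⟨h1, h2, h3, h4⟩ := hmem' w hwL
        refine ⟨h1, h2, h3, fun e he => ?_⟩
        have := h4 e he
        rw [hg] at this
        by_cases hel : e ∈ l
        · simp [hel] at this
        · simpa [hel] using this
    · refine List.Pairwise.cons ?_ hpw'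
      intro w' hw'L e he hew'
      have := (hmem' w' hw'L).2.2.2 e hew'
      rw [hg] at this
      simp [hp₀l e he] at this

lemma menger {X Y : Set G.V} (hXY : Disjoint X Y) (m : ℕ)
    (hcut : ∀ S : Set G.V, X ⊆ S → Disjoint S Y → m ≤ G.delta S) :
    G.ConnectorBetween X Y m := by
  obtain ⟨f, hf, hv⟩ := G.exists_flow hXY hcut
  obtain ⟨L, hlen, hmem, hpw⟩ := G.flow_decompose hXY m f hf hv
  refine ⟨fun i => (L.get (Fin.cast hlen.symm i)).1,
    fun i => (L.get (Fin.cast hlen.symm i)).2.1,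
    fun i => (L.get (Fin.cast hlen.symm i)).2.2, ?_, ?_, ?_, ?_⟩
  · exact fun i => (hmem _ (L.get_mem _)).1
  · exact fun i => (hmem _ (L.get_mem _)).2.1
  · exact fun i => (hmem _ (L.get_mem _)).2.2.1
  · intro i j hij e hei
    have hij' : (Fin.cast hlen.symm i) ≠ (Fin.cast hlen.symm j) := by
      simpa [Fin.ext_iff] using fun h => hij (Fin.ext h)
    rcases lt_or_gt_of_ne hij' with hlt | hgt
    · exact (List.pairwise_iff_get.mp hpw _ _ hlt) e hei
    · intro hej
      exact (List.pairwise_iff_get.mp hpw _ _ hgt) e hej hei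

noncomputable def Phi (G : Multigraph) (ρ : G.V → ℕ) : ℕ :=
  ∑ v : G.V, G.delta {u | ρ u ≤ ρ v}

lemma delta_le_cwOrd (ρ : G.V → ℕ) (v : G.V) :
    G.delta {u | ρ u ≤ ρ v} ≤ G.cwOrd ρ := by
  have hfin : {w | ∃ v : G.V, w = G.delta {u | ρ u ≤ ρ v}}.Finite := by
    have : {w | ∃ v : G.V, w = G.delta {u | ρ u ≤ ρ v}}
        = Set.range (fun v => G.delta {u | ρ u ≤ ρ v}) := by
      ext w; simp [eq_comm, Set.range]
    rw [this]; exact Set.finite_range _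
  exact le_csSup hfin.bddAbove ⟨v, rfl⟩

lemma cwOrd_le {ρ : G.V → ℕ} {W : ℕ} (hV : Nonempty G.V)
    (h : ∀ v, G.delta {u | ρ u ≤ ρ v} ≤ W) : G.cwOrd ρ ≤ W := by
  refine csSup_le ⟨_, ⟨Classical.arbitrary G.V, rfl⟩⟩ ?_
  rintro w ⟨v, rfl⟩
  exact h v

lemma cutwidth_le (ρ : G.V → ℕ) (hinj : Function.Injective ρ) :
    G.cutwidth ≤ G.cwOrd ρ := Nat.sInf_le ⟨ρ, hinj, rfl⟩

lemma lexNat {N a b ka kb : ℕ} (ha : a ≤ N) (hb : b ≤ N) :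
    ka * (N + 1) + a ≤ kb * (N + 1) + b ↔ ka < kb ∨ (ka = kb ∧ a ≤ b) := by
  constructor
  · intro h
    rcases lt_trichotomy ka kb with h1 | h1 | h1
    · exact .inl h1
    · subst h1; exact .inr ⟨rfl, by omega⟩
    · exfalso
      have h2 : (kb + 1) * (N + 1) ≤ ka * (N + 1) := Nat.mul_le_mul_right _ h1
      nlinarith
  · rintro (h | ⟨rfl, hab⟩)
    · have h2 : (ka + 1) * (N + 1) ≤ kb * (N + 1) := Nat.mul_le_mul_right _ h
      nlinarith
    · omega

lemma delta_submod (A B : Set G.V) :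
    G.delta (A ∩ B) + G.delta (A ∪ B) ≤ G.delta A + G.delta B := by
  simp only [delta_eq_card, Finset.card_filter]
  rw [← Finset.sum_add_distrib, ← Finset.sum_add_distrib]
  apply Finset.sum_le_sum
  intro e _
  by_cases h1 : (G.ends e).1 ∈ A <;> by_cases h2 : (G.ends e).2 ∈ A <;>
    by_cases h3 : (G.ends e).1 ∈ B <;> by_cases h4 : (G.ends e).2 ∈ B <;>
    simp [Set.mem_inter_iff, Set.mem_union, h1, h2, h3, h4]

theorem exists_linked_opt (G : Multigraph) :
    ∃ ρ : G.V → ℕ, Function.Injective ρ ∧ G.cwOrd ρ = G.cutwidth ∧ G.Linked ρ := by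
  have hex : ∃ ρ : G.V → ℕ, Function.Injective ρ ∧ G.cwOrd ρ = G.cutwidth := by
    have h1 : {w | ∃ ρ : G.V → ℕ, Function.Injective ρ ∧ G.cwOrd ρ = w}.Nonempty :=
      ⟨_, fun v => ((Fintype.equivFin G.V) v : ℕ),
        fun a b hab => (Fintype.equivFin G.V).injective (Fin.ext hab), rfl⟩
    obtain ⟨ρ, hinj, hw⟩ := Nat.sInf_mem h1
    exact ⟨ρ, hinj, hw⟩
  have hΦne : {w | ∃ σ : G.V → ℕ,
      (Function.Injective σ ∧ G.cwOrd σ = G.cutwidth) ∧ G.Phi σ = w}.Nonempty := by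
    obtain ⟨ρ, h1, h2⟩ := hex
    exact ⟨_, ρ, ⟨h1, h2⟩, rfl⟩
  obtain ⟨ρ, ⟨hinj, hcw⟩, hphi⟩ := Nat.sInf_mem hΦne
  refine ⟨ρ, hinj, hcw, ?_⟩
  intro u u' huu'
  have hmle : ∀ v : G.V, ρ u ≤ ρ v → ρ v ≤ ρ u' →
      sInf {w | ∃ v : G.V, ρ u ≤ ρ v ∧ ρ v ≤ ρ u' ∧ w = G.delta {z | ρ z ≤ ρ v}}
        ≤ G.delta {z | ρ z ≤ ρ v} :=
    fun v h1 h2 => Nat.sInf_le ⟨v, h1, h2, rfl⟩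
  have hXY : Disjoint {z | ρ z ≤ ρ u} {z : G.V | ¬ ρ z ≤ ρ u'} :=
    Set.disjoint_left.mpr fun z hz hz' => hz' (le_trans hz huu')
  refine G.menger hXY _ ?_
  intro S hXS hSY
  have hSu' : S ⊆ {z | ρ z ≤ ρ u'} := fun z hz => by
    by_contra h
    exact Set.disjoint_left.mp hSY hz h
  obtain ⟨S₀, hXS₀, hS₀u', hδS₀⟩ := Nat.sInf_mem
    (⟨_, {z | ρ z ≤ ρ u}, le_refl _, fun z hz => le_trans hz huu', rfl⟩ :
      {w | ∃ T : Set G.V, {z | ρ z ≤ ρ u} ⊆ T ∧ T ⊆ {z | ρ z ≤ ρ u'} ∧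
        w = G.delta T}.Nonempty)
  have hmin : ∀ T : Set G.V, {z | ρ z ≤ ρ u} ⊆ T → T ⊆ {z | ρ z ≤ ρ u'} →
      G.delta S₀ ≤ G.delta T :=
    fun T h1 h2 => hδS₀ ▸ Nat.sInf_le ⟨T, h1, h2, rfl⟩
  suffices hms : sInf {w | ∃ v : G.V, ρ u ≤ ρ v ∧ ρ v ≤ ρ u' ∧
      w = G.delta {z | ρ z ≤ ρ v}} ≤ G.delta S₀ from
    le_trans hms (hmin S hXS hSu')
  by_contra hlt
  push_neg at hlt
  -- Exchange argument
  have hU : ∀ z ∈ S₀, ρ z ≤ ρ u' := hS₀u'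
  have hL : ∀ z : G.V, ρ z ≤ ρ u → z ∈ S₀ := hXS₀
  set κ : G.V → ℕ := fun v =>
    if ρ v ≤ ρ u then 0 else if v ∈ S₀ ∧ ρ v ≤ ρ u' then 1
      else if ρ v ≤ ρ u' then 2 else 3 with hκdef
  have hκ : ∀ w : G.V, (κ w = 0 ∧ ρ w ≤ ρ u)
      ∨ (κ w = 1 ∧ ρ u < ρ w ∧ w ∈ S₀ ∧ ρ w ≤ ρ u')
      ∨ (κ w = 2 ∧ ρ u < ρ w ∧ w ∉ S₀ ∧ ρ w ≤ ρ u')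
      ∨ (κ w = 3 ∧ ρ u' < ρ w) := by
    intro w
    simp only [hκdef]
    split_ifs with h1 h2 h3
    · exact .inl ⟨rfl, h1⟩
    · exact .inr (.inl ⟨rfl, by omega, h2.1, h2.2⟩)
    · exact .inr (.inr (.inl ⟨rfl, by omega, fun hw => h2 ⟨hw, h3⟩, h3⟩))
    · exact .inr (.inr (.inr ⟨rfl, by omega⟩))
  set N := Finset.univ.sup ρ with hNdef
  have hN : ∀ v, ρ v ≤ N := fun v => Finset.le_sup (Finset.mem_univ v)
  set ρ' : G.V → ℕ := fun v => κ v * (N + 1) + ρ v with hρ'def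
  have hord : ∀ a b, ρ' a ≤ ρ' b ↔ (κ a < κ b ∨ (κ a = κ b ∧ ρ a ≤ ρ b)) :=
    fun a b => lexNat (hN a) (hN b)
  have hinj' : Function.Injective ρ' := by
    intro a b hab
    have h1 := (hord a b).mp hab.le
    have h2 := (hord b a).mp hab.ge
    apply hinj
    rcases h1 with h1 | ⟨_, h1⟩ <;> rcases h2 with h2 | ⟨_, h2⟩ <;> omega
  have hpre0 : ∀ v, κ v = 0 → {w | ρ' w ≤ ρ' v} = {w | ρ w ≤ ρ v} := by
    intro v hv
    have hvu : ρ v ≤ ρ u := by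
      rcases hκ v with ⟨_, h⟩ | ⟨h, _⟩ | ⟨h, _⟩ | ⟨h, _⟩ <;> omega
    ext w
    simp only [Set.mem_setOf_eq, hord w v, hv]
    constructor
    · rintro (h | ⟨_, h⟩) <;> omega
    · intro h
      have hw0 : κ w = 0 := by
        rcases hκ w with ⟨h', _⟩ | ⟨_, h', _⟩ | ⟨_, h', _⟩ | ⟨_, h'⟩ <;> omega
      exact .inr ⟨hw0, h⟩
  have hpre3 : ∀ v, κ v = 3 → {w | ρ' w ≤ ρ' v} = {w | ρ w ≤ ρ v} := by
    intro v hv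
    have hvu : ρ u' < ρ v := by
      rcases hκ v with ⟨h, h'⟩ | ⟨h, h', _⟩ | ⟨h, h', _⟩ | ⟨h, h'⟩ <;> omega
    ext w
    simp only [Set.mem_setOf_eq, hord w v, hv]
    constructor
    · rintro (h | ⟨_, h⟩)
      · rcases hκ w with ⟨h', h''⟩ | ⟨h', _, _, h''⟩ | ⟨h', _, _, h''⟩ | ⟨h', h''⟩ <;> omega
      · exact h
    · intro h
      rcases hκ w with ⟨h', h''⟩ | ⟨h', _, _, h''⟩ | ⟨h', _, _, h''⟩ | ⟨h', h''⟩ <;>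
        [exact .inl (by omega); exact .inl (by omega); exact .inl (by omega);
          exact .inr ⟨by omega, h⟩]
  have hpre1 : ∀ v, κ v = 1 → {w | ρ' w ≤ ρ' v} = S₀ ∩ {w | ρ w ≤ ρ v} := by
    intro v hv
    have hvfacts : ρ u < ρ v ∧ v ∈ S₀ ∧ ρ v ≤ ρ u' := by
      rcases hκ v with ⟨h, h'⟩ | ⟨h, h1, h2, h3⟩ | ⟨h, h1, h2, h3⟩ | ⟨h, h'⟩ <;>
        first | omega | exact ⟨h1, h2, h3⟩
    ext w
    simp only [Set.mem_setOf_eq, Set.mem_inter_iff, hord w v, hv]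
    constructor
    · rintro (h | ⟨hw1, h⟩)
      · have hw0 : κ w = 0 := by omega
        have hwu : ρ w ≤ ρ u := by
          rcases hκ w with ⟨h', h''⟩ | ⟨h', _⟩ | ⟨h', _⟩ | ⟨h', _⟩ <;> omega
        exact ⟨hL w hwu, by omega⟩
      · rcases hκ w with ⟨h', _⟩ | ⟨h', _, hw2, _⟩ | ⟨h', _⟩ | ⟨h', _⟩ <;>
          first | omega | exact ⟨hw2, h⟩
    · rintro ⟨hwS, hwv⟩
      rcases hκ w with ⟨h', h''⟩ | ⟨h', _, _, _⟩ | ⟨h', _, hw2, _⟩ | ⟨h', h''⟩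
      · exact .inl (by omega)
      · exact .inr ⟨by omega, hwv⟩
      · exact absurd hwS hw2
      · exact absurd (hU w hwS) (by omega)
  have hpre2 : ∀ v, κ v = 2 → {w | ρ' w ≤ ρ' v} = S₀ ∪ {w | ρ w ≤ ρ v} := by
    intro v hv
    have hvfacts : ρ u < ρ v ∧ ρ v ≤ ρ u' := by
      rcases hκ v with ⟨h, h'⟩ | ⟨h, h1, h2, h3⟩ | ⟨h, h1, h2, h3⟩ | ⟨h, h'⟩ <;>
        first | omega | exact ⟨h1, h3⟩
    ext w
    simp only [Set.mem_setOf_eq, Set.mem_union, hord w v, hv]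
    constructor
    · rintro (h | ⟨hw2, h⟩)
      · rcases hκ w with ⟨h', h''⟩ | ⟨h', _, hw2, _⟩ | ⟨h', _⟩ | ⟨h', _⟩
        · exact .inl (hL w h'')
        · exact .inl hw2
        · omega
        · omega
      · exact .inr h
    · rintro (hwS | hwv)
      · rcases hκ w with ⟨h', h''⟩ | ⟨h', _⟩ | ⟨h', _, hw2, _⟩ | ⟨h', h''⟩
        · exact .inl (by omega)
        · exact .inl (by omega)
        · exact absurd hwS hw2
        · exact absurd (hU w hwS) (by omega)
      · rcases hκ w with ⟨h', h''⟩ | ⟨h', _⟩ | ⟨h', _⟩ | ⟨h', h''⟩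
        · exact .inl (by omega)
        · exact .inl (by omega)
        · exact .inr ⟨by omega, hwv⟩
        · exact .inl (by omega)
  have hterm : ∀ v, G.delta {w | ρ' w ≤ ρ' v} ≤ G.delta {w | ρ w ≤ ρ v} := by
    intro v
    rcases hκ v with ⟨h0, hv⟩ | ⟨h1, hv1, hv2, hv3⟩ | ⟨h2, hv1, hv2, hv3⟩ | ⟨h3, hv⟩
    · rw [hpre0 v h0]
    · rw [hpre1 v h1]
      have hsub := G.delta_submod S₀ {w | ρ w ≤ ρ v}
      have hmin' : G.delta S₀ ≤ G.delta (S₀ ∪ {w | ρ w ≤ ρ v}) := by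
        refine hmin _ (fun z hz => Or.inl (hXS₀ hz)) ?_
        rintro z (hz | hz)
        · exact hU z hz
        · exact le_trans hz hv3
      omega
    · rw [hpre2 v h2]
      have hsub := G.delta_submod S₀ {w | ρ w ≤ ρ v}
      have hmin' : G.delta S₀ ≤ G.delta (S₀ ∩ {w | ρ w ≤ ρ v}) := by
        refine hmin _ (fun z hz => ⟨hXS₀ hz, by
          have h' : ρ z ≤ ρ u := hz
          show ρ z ≤ ρ v
          omega⟩) ?_
        rintro z ⟨hz, _⟩
        exact hU z hz
      omega
    · rw [hpre3 v h3]
  have hSI : ∃ v, v ∈ S₀ ∧ ρ u < ρ v ∧ ρ v ≤ ρ u' := by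
    by_contra hno
    push_neg at hno
    have hS₀X : S₀ = {z | ρ z ≤ ρ u} := by
      refine subset_antisymm (fun z hz => ?_) hXS₀
      have h1 := hU z hz
      show ρ z ≤ ρ u
      by_contra h
      have h2 := hno z hz (by omega)
      omega
    rw [hS₀X] at hlt
    exact absurd (hmle u le_rfl huu') (by omega)
  obtain ⟨vv, hvv⟩ := hSI
  obtain ⟨v₁, hv₁mem, hv₁max⟩ := Finset.exists_max_image
    (Finset.univ.filter (fun v => v ∈ S₀ ∧ ρ u < ρ v ∧ ρ v ≤ ρ u')) ρ
    ⟨vv, Finset.mem_filter.mpr ⟨Finset.mem_univ _, hvv⟩⟩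
  obtain ⟨hv₁S, hv₁u, hv₁u'⟩ := (Finset.mem_filter.mp hv₁mem).2
  have hκv₁ : κ v₁ = 1 := by
    rcases hκ v₁ with ⟨h', h''⟩ | ⟨h', _⟩ | ⟨h', _, hw2, _⟩ | ⟨h', h''⟩
    · omega
    · exact h'
    · exact absurd hv₁S hw2
    · omega
  have hS₀sub : S₀ ∩ {w | ρ w ≤ ρ v₁} = S₀ := by
    refine Set.inter_eq_left.mpr fun z hz => ?_
    by_cases hzu : ρ z ≤ ρ u
    · exact Set.mem_setOf_eq ▸ (by omega)
    · have := hv₁max z (Finset.mem_filter.mpr ⟨Finset.mem_univ _, hz, by omega, hU z hz⟩)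
      exact this
  have hstrict : G.delta {w | ρ' w ≤ ρ' v₁} < G.delta {w | ρ w ≤ ρ v₁} := by
    rw [hpre1 v₁ hκv₁, hS₀sub]
    have := hmle v₁ (by omega) hv₁u'
    omega
  have hcw' : G.cwOrd ρ' = G.cutwidth := by
    have hle : G.cwOrd ρ' ≤ G.cutwidth :=
      G.cwOrd_le ⟨u⟩ fun v => le_trans (hterm v) (le_trans (G.delta_le_cwOrd ρ v) hcw.le)
    exact le_antisymm hle (G.cutwidth_le ρ' hinj')
  have hφ' : G.Phi ρ' < G.Phi ρ := by
    unfold Phi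
    exact Finset.sum_lt_sum (fun v _ => hterm v) ⟨v₁, Finset.mem_univ _, hstrict⟩
  have hle' : sInf {w | ∃ σ : G.V → ℕ,
      (Function.Injective σ ∧ G.cwOrd σ = G.cutwidth) ∧ G.Phi σ = w} ≤ G.Phi ρ' :=
    Nat.sInf_le ⟨ρ', ⟨hinj', hcw'⟩, rfl⟩
  omega


end LinkedProofAux

end Multigraph

open Multigraph in
/-- every multigraph admits a linked ordering of optimum width. -/
theorem exists_linked_optimum_ordering (G : Multigraph) :
    ∃ ρ : G.V → ℕ, Function.Injective ρ ∧ G.cwOrd ρ = G.cutwidth ∧ G.Linked ρ :=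
  G.exists_linked_opt
end

section
/- Let N be a positive integer. For all positive integers s and r and every word w of length N^r over the alphabet A_{s,r} = {s, s+1, …, s+r−1}, there exist a symbol k ∈ A_{s,r} and a contiguous subword u of w such that (a) every symbol occurring in u is at least k, and (b) the symbol k occurs at least N times in u. -/
/-- Gap lemma: if a finite set `T` meets `[a,b]` in at most `m` points and the
interval has length at least `(m+1)*L`, there is a subinterval of length `L`
inside `[a,b]` avoiding `T`. -/
lemma gap_lemma (L : ℕ) (hL : 1 ≤ L) :
    ∀ m (T : Finset ℕ) (a b : ℕ), (T ∩ Finset.Icc a b).card ≤ m →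
      a + (m + 1) * L ≤ b + 1 →
      ∃ a', a ≤ a' ∧ a' + L ≤ b + 1 ∧ ∀ i, a' ≤ i → i < a' + L → i ∉ T := by
  intro m
  induction m with
  | zero =>
    intro T a b hcard hlen
    refine ⟨a, le_rfl, by omega, fun i hi1 hi2 hiT => ?_⟩
    have : i ∈ T ∩ Finset.Icc a b := by
      simp only [Finset.mem_inter, Finset.mem_Icc]
      exact ⟨hiT, hi1, by omega⟩
    have := Finset.card_pos.mpr ⟨i, this⟩
    omega
  | succ m ih =>
    intro T a b hcard hlen
    by_cases h : ∃ t ∈ T, a ≤ t ∧ t < a + L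
    · obtain ⟨t, htT, hta, htL⟩ := h
      have htmem : t ∈ T ∩ Finset.Icc a b := by
        simp only [Finset.mem_inter, Finset.mem_Icc]
        refine ⟨htT, hta, ?_⟩
        nlinarith
      have hsub : T ∩ Finset.Icc (t + 1) b ⊆ (T ∩ Finset.Icc a b).erase t := by
        intro x hx
        simp only [Finset.mem_inter, Finset.mem_Icc] at hx
        simp only [Finset.mem_erase, Finset.mem_inter, Finset.mem_Icc]
        exact ⟨by omega, hx.1, by omega, hx.2.2⟩
      have hcard' : (T ∩ Finset.Icc (t + 1) b).card ≤ m := by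
        have := Finset.card_le_card hsub
        have := Finset.card_erase_le (a := t) (s := T ∩ Finset.Icc a b)
        have hpos := Finset.card_pos.mpr ⟨t, htmem⟩
        have := Finset.card_erase_of_mem htmem
        omega
      obtain ⟨a', ha1, ha2, ha3⟩ := ih T (t + 1) b hcard' (by nlinarith)
      exact ⟨a', by omega, ha2, ha3⟩
    · push_neg at h
      refine ⟨a, le_rfl, by nlinarith, fun i hi1 hi2 hiT => ?_⟩
      exact absurd hi1 (by have := h i hiT; omega)

lemma key_lemma (N : ℕ) (hN : 1 ≤ N) (w : ℕ → ℕ) :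
    ∀ r s a b : ℕ, a + N ^ r ≤ b + 1 →
      (∀ i, a ≤ i → i ≤ b → s ≤ w i ∧ w i < s + r) →
      ∃ k a' b', s ≤ k ∧ k < s + r ∧ a ≤ a' ∧ a' ≤ b' ∧ b' ≤ b ∧
        (∀ i, a' ≤ i → i ≤ b' → k ≤ w i) ∧
        N ≤ ((Finset.Icc a' b').filter (fun i => w i = k)).card := by
  intro r
  induction r with
  | zero =>
    intro s a b hlen hsym
    have := hsym a le_rfl (by simpa using hlen)
    omega
  | succ r ih =>
    intro s a b hlen hsym
    have hpow : 1 ≤ N ^ r := Nat.one_le_pow _ _ hN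
    have hpow' : N ^ (r + 1) = N * N ^ r := by ring
    have hab : a ≤ b := by nlinarith
    set T := (Finset.Icc a b).filter (fun i => w i = s) with hT
    by_cases hc : N ≤ T.card
    · refine ⟨s, a, b, le_rfl, by omega, le_rfl, hab, le_rfl,
        fun i hi1 hi2 => (hsym i hi1 hi2).1, ?_⟩
      convert hc using 2
    · have hTcard : (T ∩ Finset.Icc a b).card ≤ N - 1 := by
        have h1 : (T ∩ Finset.Icc a b).card ≤ T.card :=
          Finset.card_le_card Finset.inter_subset_left
        omega
      obtain ⟨a', ha1, ha2, ha3⟩ := gap_lemma (N ^ r) hpow (N - 1) T a b hTcard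
        (by have : (N - 1 + 1) = N := by omega
            rw [this]; nlinarith)
      have hside : ∀ i, a' ≤ i → i ≤ a' + N ^ r - 1 → s + 1 ≤ w i ∧ w i < s + 1 + r := by
        intro i hi1 hi2
        have hib : i ≤ b := by omega
        have hia : a ≤ i := by omega
        have := hsym i hia hib
        have hiT : i ∉ T := ha3 i hi1 (by omega)
        have : w i ≠ s := by
          intro hwi
          exact hiT (by simp [hT, Finset.mem_filter, Finset.mem_Icc, hia, hib, hwi])
        omega
      obtain ⟨k, a'', b'', hk1, hk2, h1, h2, h3, h4, h5⟩ :=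
        ih (s + 1) a' (a' + N ^ r - 1) (by omega) hside
      exact ⟨k, a'', b'', by omega, by omega, by omega, h2, by omega, h4, h5⟩

/-- for every word `w` of length `N^r` over the alphabet
`A_{s,r} = {s,…,s+r−1}`, there are a symbol `k ∈ A_{s,r}` and a contiguous subword
(given by index bounds `a ≤ b`) all of whose symbols are `≥ k`, and in which `k`
occurs at least `N` times. -/
theorem word_unpump (N : ℕ) (hN : 1 ≤ N) (s r : ℕ) (hs : 1 ≤ s) (hr : 1 ≤ r)
    (w : Fin (N ^ r) → ℕ) (hw : ∀ i, w i ∈ Set.Icc s (s + r - 1)) :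
    ∃ k ∈ Set.Icc s (s + r - 1), ∃ a b : ℕ, a ≤ b ∧ b < N ^ r ∧
      (∀ i : Fin (N ^ r), a ≤ (i : ℕ) → (i : ℕ) ≤ b → k ≤ w i) ∧
      N ≤ {i : Fin (N ^ r) | a ≤ (i : ℕ) ∧ (i : ℕ) ≤ b ∧ w i = k}.ncard := by
  have hpow : 1 ≤ N ^ r := Nat.one_le_pow _ _ hN
  set W : ℕ → ℕ := fun i => if h : i < N ^ r then w ⟨i, h⟩ else s with hW
  have hside : ∀ i, 0 ≤ i → i ≤ N ^ r - 1 → s ≤ W i ∧ W i < s + r := by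
    intro i _ hi
    have hi' : i < N ^ r := by omega
    have := hw ⟨i, hi'⟩
    simp only [Set.mem_Icc] at this
    simp only [hW, dif_pos hi']
    omega
  obtain ⟨k, a, b, hk1, hk2, h1, h2, h3, h4, h5⟩ :=
    key_lemma N hN W r s 0 (N ^ r - 1) (by omega) hside
  refine ⟨k, ⟨hk1, by omega⟩, a, b, h2, by omega, ?_, ?_⟩
  · intro i hi1 hi2
    have := h4 i hi1 hi2
    simpa only [hW, dif_pos i.isLt] using this
  · -- transfer the Finset card to ncard
    have hb : b < N ^ r := by omega
    set S := {i : Fin (N ^ r) | a ≤ (i : ℕ) ∧ (i : ℕ) ≤ b ∧ w i = k} with hS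
    have hfin : S.Finite := Set.toFinite _
    rw [Set.ncard_eq_toFinset_card' S]
    refine le_trans h5 ?_
    apply Finset.card_le_card_of_injOn (fun i => ⟨i % N ^ r, Nat.mod_lt _ (by omega)⟩)
    · intro x hx
      simp only [Finset.mem_coe, Finset.mem_filter, Finset.mem_Icc] at hx
      have hxlt : x < N ^ r := by omega
      have hxmod : x % N ^ r = x := Nat.mod_eq_of_lt hxlt
      simp only [Finset.mem_coe, Set.mem_toFinset, hS, Set.mem_setOf_eq, hxmod]
      refine ⟨hx.1.1, hx.1.2, ?_⟩
      have := hx.2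
      simpa only [hW, hxmod, dif_pos hxlt] using this
    · intro x hx y hy hxy
      simp only [Finset.mem_coe, Finset.mem_filter, Finset.mem_Icc] at hx hy
      have hxlt : x < N ^ r := by omega
      have hylt : y < N ^ r := by omega
      have := congrArg (Fin.val) hxy
      simp only [Nat.mod_eq_of_lt hxlt, Nat.mod_eq_of_lt hylt] at this
      exact this
end

section
/- Let r and N be positive integers and let w be a word of length N^r over the alphabet [r] = {1,…,r}. Then there exist a number k ∈ [r] and a contiguous subword u of w such that (a) every symbol occurring in u is at least k, and (b) the symbol k occurs at least N times in u. -/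
lemma word_key (N : ℕ) (hN : 1 ≤ N) :
    ∀ s c a (w : ℕ → ℕ), 1 ≤ s →
      (∀ i, a ≤ i → i < a + N ^ s → c ≤ w i ∧ w i < c + s) →
      ∃ k, c ≤ k ∧ k < c + s ∧ ∃ a' b', a ≤ a' ∧ a' ≤ b' ∧ b' < a + N ^ s ∧
        (∀ i, a' ≤ i → i ≤ b' → k ≤ w i) ∧
        N ≤ ((Finset.Icc a' b').filter (fun i => w i = k)).card := by
  intro s
  induction s with
  | zero => intro c a w h; omega
  | succ s ih =>
    intro c a w _ hw
    rcases Nat.eq_zero_or_pos s with hs | hs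
    · subst hs
      have hp1 : N ^ (0+1) = N := by norm_num
      refine ⟨c, le_refl c, by omega, a, a + N - 1, le_refl a, by omega, by omega, ?_, ?_⟩
      · intro i h1 h2
        exact (hw i h1 (by omega)).1
      · have heq : ((Finset.Icc a (a + N - 1)).filter (fun i => w i = c)) =
            Finset.Icc a (a + N - 1) := by
          apply Finset.filter_true_of_mem
          intro i hi
          rw [Finset.mem_Icc] at hi
          have := hw i hi.1 (by omega)
          omega
        rw [heq, Nat.card_Icc]; omega
    · by_cases hc : N ≤ ((Finset.Icc a (a + N ^ (s+1) - 1)).filter (fun i => w i = c)).card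
      · have hpow : 1 ≤ N ^ (s+1) := Nat.one_le_pow _ _ hN
        refine ⟨c, le_refl c, by omega, a, a + N ^ (s+1) - 1, le_refl a, by omega, by omega,
          fun i h1 h2 => (hw i h1 (by omega)).1, hc⟩
      · -- some block of length N^s has no occurrence of c
        have hpow : 1 ≤ N ^ s := Nat.one_le_pow _ _ hN
        have hmul : ∀ j1 j2 : ℕ, j1 ≤ j2 → j1 * N ^ s ≤ j2 * N ^ s :=
          fun j1 j2 h => Nat.mul_le_mul_right _ h
        have hblock : ∃ j < N, ∀ i, a + j * N ^ s ≤ i → i < a + (j+1) * N ^ s → w i ≠ c := by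
          by_contra hno
          push_neg at hno
          have hno' : ∀ j : ℕ, ∃ i, j < N →
              (a + j * N ^ s ≤ i ∧ i < a + (j+1) * N ^ s ∧ w i = c) := by
            intro j
            by_cases hj : j < N
            · obtain ⟨i, h1, h2, h3⟩ := hno j hj
              exact ⟨i, fun _ => ⟨h1, h2, h3⟩⟩
            · exact ⟨0, fun h => absurd h hj⟩
          choose g hg using hno'
          apply hc
          have := Finset.card_le_card_of_injOn (s := Finset.range N)
            (t := (Finset.Icc a (a + N ^ (s+1) - 1)).filter (fun i => w i = c)) g ?_ ?_
          · simpa using this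
          · intro j hj
            rw [Finset.mem_coe, Finset.mem_range] at hj
            obtain ⟨h1, h2, h3⟩ := hg j hj
            have hle : a + (j+1) * N ^ s ≤ a + N ^ (s+1) := by
              have := hmul (j+1) N (by omega)
              rw [pow_succ, Nat.mul_comm (N ^ s) N] at *
              omega
            simp only [Finset.mem_coe, Finset.mem_filter, Finset.mem_Icc]
            exact ⟨⟨by omega, by omega⟩, h3⟩
          · intro j1 hj1 j2 hj2 heq
            rw [Finset.coe_range, Set.mem_Iio] at hj1 hj2
            obtain ⟨h11, h12, -⟩ := hg j1 hj1
            obtain ⟨h21, h22, -⟩ := hg j2 hj2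
            rcases lt_trichotomy j1 j2 with h | h | h
            · have := hmul (j1+1) j2 (by omega); omega
            · exact h
            · have := hmul (j2+1) j1 (by omega); omega
        obtain ⟨j, hj, hnc⟩ := hblock
        have e1 : a + j * N ^ s + N ^ s = a + (j+1) * N ^ s := by ring
        have e2 : (j+1) * N ^ s ≤ N ^ (s+1) := by
          rw [pow_succ']
          exact Nat.mul_le_mul_right _ (by omega)
        have hle : a + (j+1) * N ^ s ≤ a + N ^ (s+1) := by
          have : (j+1) * N ^ s ≤ N * N ^ s := Nat.mul_le_mul_right _ (by omega)
          rw [pow_succ]; nlinarith [this]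
        obtain ⟨k, hk1, hk2, a', b', ha', hab, hb', hall, hcnt⟩ :=
          ih (c+1) (a + j * N ^ s) w hs (by
            intro i h1 h2
            have h3 : a ≤ i := by omega
            have h4 : i < a + N ^ (s+1) := by omega
            have := hw i h3 h4
            have := hnc i h1 (by omega)
            omega)
        exact ⟨k, by omega, by omega, a', b', by omega, hab, by omega, hall, hcnt⟩

/-- for every word `w` of length `N^r` over the alphabet `{1,…,r}`,
there are a symbol `k ∈ {1,…,r}` and a contiguous subword (given by index bounds
`a ≤ b`) all of whose symbols are `≥ k`, and in which `k` occurs at least `N` times. -/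
theorem word_unpump_one (r N : ℕ) (hr : 1 ≤ r) (hN : 1 ≤ N)
    (w : Fin (N ^ r) → ℕ) (hw : ∀ i, w i ∈ Set.Icc 1 r) :
    ∃ k ∈ Set.Icc 1 r, ∃ a b : ℕ, a ≤ b ∧ b < N ^ r ∧
      (∀ i : Fin (N ^ r), a ≤ (i : ℕ) → (i : ℕ) ≤ b → k ≤ w i) ∧
      N ≤ {i : Fin (N ^ r) | a ≤ (i : ℕ) ∧ (i : ℕ) ≤ b ∧ w i = k}.ncard := by
  set W : ℕ → ℕ := fun i => if h : i < N ^ r then w ⟨i, h⟩ else 1 with hW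
  have hWval : ∀ i : Fin (N ^ r), W (i : ℕ) = w i := by
    intro i
    simp only [hW, dif_pos i.isLt, Fin.eta]
  obtain ⟨k, hk1, hk2, a, b, ha, hab, hb, hall, hcnt⟩ :=
    word_key N hN r 1 0 W hr (by
      intro i h1 h2
      have hi : i < N ^ r := by omega
      have := hw ⟨i, hi⟩
      simp only [Set.mem_Icc] at this
      simp only [hW, dif_pos hi]
      omega)
  simp only [zero_add] at hb
  refine ⟨k, Set.mem_Icc.mpr ⟨hk1, by omega⟩, a, b, hab, hb, ?_, ?_⟩
  · intro i h1 h2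
    have := hall (i : ℕ) h1 h2
    rwa [hWval] at this
  · set S : Set (Fin (N ^ r)) := {i : Fin (N ^ r) | a ≤ (i : ℕ) ∧ (i : ℕ) ≤ b ∧ w i = k}
      with hS
    have hSfin : S = ↑(Finset.univ.filter
        (fun i : Fin (N ^ r) => a ≤ (i : ℕ) ∧ (i : ℕ) ≤ b ∧ w i = k)) := by
      ext i; simp [hS]
    rw [hSfin, Set.ncard_coe_finset]
    refine le_trans hcnt (Finset.card_le_card_of_injOn
      (fun i => if h : i < N ^ r then (⟨i, h⟩ : Fin (N ^ r)) else ⟨0, by positivity⟩)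
      ?_ ?_)
    · intro i hi
      simp only [Finset.mem_coe, Finset.mem_filter, Finset.mem_Icc] at hi
      obtain ⟨⟨h1, h2⟩, h3⟩ := hi
      have hlt : i < N ^ r := by omega
      simp only [dif_pos hlt, Finset.mem_coe, Finset.mem_filter, Finset.mem_univ, true_and]
      refine ⟨h1, h2, ?_⟩
      rw [← hWval ⟨i, hlt⟩]
      exact h3
    · intro i1 hi1 i2 hi2 heq
      simp only [Finset.coe_filter, Set.mem_setOf_eq, Finset.mem_Icc] at hi1 hi2
      have h1 : i1 < N ^ r := by omega
      have h2 : i2 < N ^ r := by omega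
      simp only [dif_pos h1, dif_pos h2] at heq
      exact congrArg Fin.val heq
end

section
/- Let k, ℓ ∈ ℕ and let 𝐀 = (A, x̄) and 𝐁 = (B, ȳ) be two k-boundaried graphs. Suppose there is an immersion model (φ,ψ) of A in B such that φ(x_i) = y_i for all i ∈ [k]. Then for every (k,ℓ)-bucket interface (b, b', μ, μ*): if 𝐁 conforms with (b, b', μ, μ*), then 𝐀 also conforms with (b, b', μ, μ*). -/
open Multigraph in
lemma exists_cross_edge_aux {G : Multigraph} (S : Set G.V) :
    ∀ {a b : G.V}, (p : G.Walk a b) → ¬ (a ∈ S ↔ b ∈ S) →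
      ∃ f ∈ p.edges, ¬ ((G.ends f).1 ∈ S ↔ (G.ends f).2 ∈ S)
  | _, _, .nil _, h => absurd Iff.rfl h
  | u, w, .cons (v := v) e he p, h => by
    by_cases hc : ((G.ends e).1 ∈ S ↔ (G.ends e).2 ∈ S)
    · have huv : (u ∈ S ↔ v ∈ S) := by
        rcases he with he | he <;> rw [he] at hc
        · exact hc
        · exact hc.symm
      have h' : ¬ (v ∈ S ↔ w ∈ S) := fun hvw => h (huv.trans hvw)
      obtain ⟨f, hf, hfc⟩ := exists_cross_edge_aux S p h'
      exact ⟨f, List.mem_cons_of_mem _ hf, hfc⟩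
    · exact ⟨e, List.mem_cons_self, hc⟩

open Multigraph in
lemma delta_le_of_walks_aux {H G : Multigraph} (m : H.V → G.V)
    (W : (e : H.E) → G.Walk (m (H.ends e).1) (m (H.ends e).2))
    (hdisj : ∀ e e', e ≠ e' → ∀ f, f ∈ (W e).edges → f ∉ (W e').edges)
    (SH : Set H.V) (SG : Set G.V) (hS : ∀ v, v ∈ SH ↔ m v ∈ SG) :
    H.delta SH ≤ G.delta SG := by
  classical
  show Set.ncard {e : H.E | ¬ ((H.ends e).1 ∈ SH ↔ (H.ends e).2 ∈ SH)} ≤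
    Set.ncard {e : G.E | ¬ ((G.ends e).1 ∈ SG ↔ (G.ends e).2 ∈ SG)}
  set s : Set H.E := {e | ¬ ((H.ends e).1 ∈ SH ↔ (H.ends e).2 ∈ SH)} with hs
  set t : Set G.E := {e | ¬ ((G.ends e).1 ∈ SG ↔ (G.ends e).2 ∈ SG)} with ht
  rcases s.eq_empty_or_nonempty with he | ⟨e₀, he₀⟩
  · simp [he]
  · have key : ∀ e ∈ s, ∃ f, f ∈ (W e).edges ∧ f ∈ t := by
      intro e he
      have hcr : ¬ (m (H.ends e).1 ∈ SG ↔ m (H.ends e).2 ∈ SG) := by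
        rw [← hS, ← hS]; exact he
      obtain ⟨f, hf, hfc⟩ := exists_cross_edge_aux SG (W e) hcr
      exact ⟨f, hf, hfc⟩
    obtain ⟨f₀, -, -⟩ := key e₀ he₀
    haveI : Nonempty G.E := ⟨f₀⟩
    choose! F hF1 hF2 using key
    refine Set.ncard_le_ncard_of_injOn F (fun e he => hF2 e he) ?_ (Set.toFinite t)
    intro e he e' he' hEq
    by_contra hne
    exact hdisj e e' hne (F e) (hF1 e he) (hEq ▸ hF1 e' he')

open Multigraph in
lemma bucketWidth_le_of_walks_aux {H G : Multigraph} (m : H.V → G.V)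
    (ρ : G.V → ℕ) (T : G.V → ℕ) (j : ℕ)
    (W : (e : H.E) → G.Walk (m (H.ends e).1) (m (H.ends e).2))
    (hdisj : ∀ e e', e ≠ e' → ∀ f, f ∈ (W e).edges → f ∉ (W e').edges) :
    H.bucketWidth (fun v => ρ (m v)) (fun v => T (m v)) j ≤ G.bucketWidth ρ T j := by
  apply csSup_le'
  rintro w ⟨SH, h1, h2, h3, rfl⟩
  set SG : Set G.V :=
    {z | T z < j ∨ (T z = j ∧ ∀ v : H.V, T (m v) = j → v ∉ SH → ρ z < ρ (m v))} with hSG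
  have hmem : ∀ v : H.V, v ∈ SH ↔ m v ∈ SG := by
    intro v
    constructor
    · intro hv
      rcases lt_or_eq_of_le (h2 v hv) with hlt | heq
      · exact Or.inl hlt
      · refine Or.inr ⟨heq, fun u hu hus => ?_⟩
        rcases lt_or_ge (ρ (m v)) (ρ (m u)) with h | h
        · exact h
        · exact absurd (h3 u v hu heq h hv) hus
    · rintro (hlt | ⟨heq, hall⟩)
      · exact h1 v hlt
      · by_contra hv
        exact lt_irrefl _ (hall v heq hv)
  have hle : H.delta SH ≤ G.delta SG := delta_le_of_walks_aux m W hdisj SH SG hmem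
  refine hle.trans (le_csSup ?_ ?_)
  · refine ⟨Nat.card G.E, ?_⟩
    rintro w ⟨S, -, -, -, rfl⟩
    calc G.delta S ≤ (Set.univ : Set G.E).ncard :=
          Set.ncard_le_ncard (Set.subset_univ _) Set.finite_univ
      _ = Nat.card G.E := Set.ncard_univ _
  · refine ⟨SG, fun z hz => Or.inl hz, ?_, ?_, rfl⟩
    · rintro z (h | ⟨h, -⟩) <;> omega
    · rintro u z hu hz hle' (h | ⟨h, hall⟩)
      · omega
      · exact Or.inr ⟨hu, fun v hv hvS => lt_of_le_of_lt hle' (hall v hv hvS)⟩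

open Multigraph in
def liftWalkExt {B : Multigraph} {k : ℕ} (y : Fin k → B.V) :
    ∀ {a b : B.V}, B.Walk a b → (B.extension y).Walk (Sum.inl a) (Sum.inl b)
  | _, _, .nil _ => .nil _
  | _, _, .cons e he p => .cons (Sum.inl e)
      (by rcases he with he | he
          · left
            show (Sum.inl (B.ends e).1, Sum.inl (B.ends e).2) = _
            rw [he]; rfl
          · right
            show (Sum.inl (B.ends e).1, Sum.inl (B.ends e).2) = _
            rw [he]; rfl)
      (liftWalkExt y p)

open Multigraph in
lemma liftWalkExt_edges {B : Multigraph} {k : ℕ} (y : Fin k → B.V) :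
    ∀ {a b : B.V} (p : B.Walk a b), (liftWalkExt y p).edges = p.edges.map Sum.inl
  | _, _, .nil _ => rfl
  | _, _, .cons e he p => by
      simp [liftWalkExt, Multigraph.Walk.edges, liftWalkExt_edges y p]; rfl

open Multigraph in
noncomputable def extWalkAux {k : ℕ} {A B : Multigraph} {x : Fin k → A.V} {y : Fin k → B.V}
    (M : ImmersionModel A B) (hM : ∀ i, M.vmap (x i) = y i) :
    (e : (A.extension x).E) → (B.extension y).Walk
      (Sum.map M.vmap id ((A.extension x).ends e).1)
      (Sum.map M.vmap id ((A.extension x).ends e).2)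
  | Sum.inl e => liftWalkExt y (M.emap e)
  | Sum.inr i => .cons (Sum.inr i)
      (Or.inl (by
        have h : ((A.extension x).ends (Sum.inr i)) = (Sum.inl (x i), Sum.inr i) := rfl
        have h2 : ((B.extension y).ends (Sum.inr i)) = (Sum.inl (y i), Sum.inr i) := rfl
        rw [h, h2]; simp [hM i]; rfl))
      (.nil _)

open Multigraph in
lemma extWalkAux_disj {k : ℕ} {A B : Multigraph} {x : Fin k → A.V} {y : Fin k → B.V}
    (M : ImmersionModel A B) (hM : ∀ i, M.vmap (x i) = y i) :
    ∀ e e', e ≠ e' → ∀ f, f ∈ (extWalkAux M hM e).edges → f ∉ (extWalkAux M hM e').edges := by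
  rintro (e | i) (e' | i') hne f hf hf'
  · change f ∈ (liftWalkExt y (M.emap e)).edges at hf
    change f ∈ (liftWalkExt y (M.emap e')).edges at hf'
    rw [liftWalkExt_edges] at hf hf'
    obtain ⟨g, hg, rfl⟩ := List.mem_map.mp hf
    obtain ⟨g', hg', h⟩ := List.mem_map.mp hf'
    cases Sum.inl_injective h
    exact M.edgeDisj e e' (fun h => hne (congrArg Sum.inl h)) _ hg hg'
  · change f ∈ (liftWalkExt y (M.emap e)).edges at hf
    change f ∈ [(Sum.inr i' : (B.extension y).E)] at hf'
    rw [liftWalkExt_edges] at hf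
    have hf'' : f = Sum.inr i' := List.mem_singleton.mp hf'
    obtain ⟨g, -, rfl⟩ := List.mem_map.mp hf
    exact Sum.inl_ne_inr hf''
  · change f ∈ (liftWalkExt y (M.emap e')).edges at hf'
    change f ∈ [(Sum.inr i : (B.extension y).E)] at hf
    rw [liftWalkExt_edges] at hf'
    have hf'' : f = Sum.inr i := List.mem_singleton.mp hf
    obtain ⟨g, -, rfl⟩ := List.mem_map.mp hf'
    exact Sum.inl_ne_inr hf''
  · change f ∈ [(Sum.inr i : (B.extension y).E)] at hf
    change f ∈ [(Sum.inr i' : (B.extension y).E)] at hf'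
    have h1 : f = Sum.inr i := List.mem_singleton.mp hf
    have h2 : f = Sum.inr i' := List.mem_singleton.mp hf'
    subst h1
    exact hne (congrArg Sum.inr (Sum.inr_injective h2))

open Multigraph in
/-- if `A` immerses into `B` with boundary mapped to boundary, then
every `(k,ℓ)`-bucket interface that `𝐁` conforms with is also conformed with by `𝐀`. -/
theorem conforms_of_immersion
    (k ℓ : ℕ) (A B : Multigraph) (x : Fin k → A.V) (y : Fin k → B.V)
    (M : ImmersionModel A B) (hM : ∀ i : Fin k, M.vmap (x i) = y i)
    (I : BucketInterface k ℓ) (hB : Conforms B y ℓ I) :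
    Conforms A x ℓ I := by
  classical
  obtain ⟨ρ, hρ, T, hT, hodd, heven, hb, hb', hw, hw'⟩ := hB
  refine ⟨fun v => ρ (Sum.map M.vmap id v),
    hρ.comp (M.inj.sumMap Function.injective_id),
    fun v => T (Sum.map M.vmap id v),
    ⟨fun v => hT.1 _, fun u v h => hT.2 _ _ h⟩,
    fun v => hodd (M.vmap v), fun i => heven i,
    fun i => by show T (Sum.inl (M.vmap (x i))) = I.b i; rw [hM i]; exact hb i,
    fun i => hb' i, ?_, ?_⟩
  · intro j hj
    exact (bucketWidth_le_of_walks_aux M.vmap (fun w => ρ (Sum.inl w))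
      (fun w => T (Sum.inl w)) j M.emap M.edgeDisj).trans (hw j hj)
  · intro j hj
    exact (bucketWidth_le_of_walks_aux (H := A.extension x) (G := B.extension y)
      (Sum.map M.vmap id) ρ T j
      (extWalkAux M hM) (extWalkAux_disj M hM)).trans (hw' j hj)
end
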